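/- arXiv:1208.6336 — 5 statements merged into one kernel-verified Lean document; each statement's English description precedes it below -/
import Mathlib

section
/- Let r, n be positive integers and let p, p', q, q' be positive divisors of r such that pq = p'q' divides rn. If gcd(p,n) = gcd(p',n) and gcd(q,n) = gcd(q',n), then G(r,p,q,n) and G(r,p',q',n) are isomorphic as groups. -/
open SemidirectProduct Multiplicative

/-- The action of `Equiv.Perm (Fin n)` on `(ℤ/rℤ)ⁿ` (written multiplicatively)
by permuting coordinates: `(π • x) i = x (π⁻¹ i)`. -/
def permAct (r n : ℕ) : Equiv.Perm (Fin n) →* MulAut (Multiplicative (Fin n → ZMod r)) where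
  toFun π := AddEquiv.toMultiplicative
    { Equiv.arrowCongr π (Equiv.refl (ZMod r)) with
      map_add' := fun _ _ => rfl }
  map_one' := by ext x; rfl
  map_mul' := by intro π σ; ext x; rfl

/-- The wreath product `G(r,n) = (ℤ/rℤ)ⁿ ⋊ Sₙ`. -/
abbrev GG (r n : ℕ) :=
  SemidirectProduct (Multiplicative (Fin n → ZMod r)) (Equiv.Perm (Fin n)) (permAct r n)

/-- Summing the coordinates, as a homomorphism. -/
def sumHom (r n : ℕ) : Multiplicative (Fin n → ZMod r) →* Multiplicative (ZMod r) where
  toFun x := ofAdd (∑ i, toAdd x i)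
  map_one' := by simp
  map_mul' x y := by
    simp [Finset.sum_add_distrib, ofAdd_add]

/-- `Δ : G(r,n) → ℤ/rℤ`, the sum of the "colors" of an element. -/
def DeltaHom (r n : ℕ) : GG r n →* Multiplicative (ZMod r) :=
  SemidirectProduct.lift (sumHom r n) 1 (by
    intro g
    refine MonoidHom.ext fun x => ?_
    show ofAdd (∑ i, toAdd x (g.symm i)) = _
    rw [Equiv.sum_comp g.symm (toAdd x)]
    simp [sumHom])

/-- The subgroup `p·(ℤ/rℤ)` of `ℤ/rℤ` (written multiplicatively). -/
def pZ (r p : ℕ) : Subgroup (Multiplicative (ZMod r)) :=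
  AddSubgroup.toSubgroup (AddSubgroup.zmultiples (p : ZMod r))

/-- The reflection group `G(r,p,n)` as a subgroup of `G(r,n)`. -/
def Grpn (r p n : ℕ) : Subgroup (GG r n) := (pZ r p).comap (DeltaHom r n)

/-- The scalar element `c = (1,(1,…,1))` of `G(r,n)`. -/
def cEl (r n : ℕ) : GG r n := inl (ofAdd fun _ => (1 : ZMod r))

/-- The cyclic subgroup `C_q = ⟨c^{r/q}⟩` of `G(r,n)`. -/
def CsubQ (r q n : ℕ) : Subgroup (GG r n) := Subgroup.zpowers (cEl r n ^ (r / q))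

/-- `C_q` viewed as a subgroup of `G(r,p,n)`. -/
def CsubIn (r p q n : ℕ) : Subgroup ↥(Grpn r p n) :=
  (CsubQ r q n).comap (Grpn r p n).subtype

lemma cEl_mem_center (r n : ℕ) : cEl r n ∈ Subgroup.center (GG r n) := by
  rw [Subgroup.mem_center_iff]
  intro g
  have h1 : (permAct r n g.right) (ofAdd fun _ => (1 : ZMod r)) =
      ofAdd fun _ => (1 : ZMod r) := rfl
  refine SemidirectProduct.ext ?_ ?_
  · simp [mul_left, cEl, h1, mul_comm]
  · simp [mul_right, cEl]

lemma CsubQ_le_center (r q n : ℕ) : CsubQ r q n ≤ Subgroup.center (GG r n) :=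
  Subgroup.zpowers_le.mpr (pow_mem (cEl_mem_center r n) _)

instance CsubIn_normal (r p q n : ℕ) : (CsubIn r p q n).Normal := by
  constructor
  intro x hx g
  have hx' : (x : GG r n) ∈ CsubQ r q n := hx
  have hc := Subgroup.mem_center_iff.mp (CsubQ_le_center r q n hx') (g : GG r n)
  have key : ((g * x * g⁻¹ : ↥(Grpn r p n)) : GG r n) = (x : GG r n) := by
    push_cast
    rw [hc]
    group
  show ((g * x * g⁻¹ : ↥(Grpn r p n)) : GG r n) ∈ CsubQ r q n
  rw [key]
  exact hx'

/-- The projective reflection group `G(r,p,q,n) = G(r,p,n)/C_q`. -/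
abbrev Gpq (r p q n : ℕ) := ↥(Grpn r p n) ⧸ CsubIn r p q n

/-- The quotient map `G(r,p,n) → G(r,p,q,n)`. -/
def Gmk (r p q n : ℕ) : ↥(Grpn r p n) →* Gpq r p q n := QuotientGroup.mk' (CsubIn r p q n)

open scoped Classical in
/-- The image in `G(r,p,q,n)` of an element of `G(r,n)` (junk value `1` if it does
not lie in `G(r,p,n)`). -/
noncomputable def toGpq (r p q n : ℕ) (g : GG r n) : Gpq r p q n :=
  if h : g ∈ Grpn r p n then Gmk r p q n ⟨g, h⟩ else 1


namespace ProofNT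


/-- The collection of congruence conditions needed to build the isomorphism. -/
structure Good (r p p' cq cq' n γ b : ℤ) : Prop where
  inv : ∃ δ : ℤ, r ∣ γ * δ - 1
  w1 : ∀ m : ℤ, r ∣ p * m → ∃ z : ℤ, r ∣ b * m - cq' * z
  w2 : ∃ z : ℤ, r ∣ γ * p + b * n - p' * z
  w3 : ∀ κ m : ℤ, r ∣ p * m - cq * n * κ → ∃ z : ℤ, r ∣ γ * cq * κ + b * m - cq' * z
  k : ∀ s m : ℤ, r ∣ p * m - n * s → (∃ z : ℤ, r ∣ γ * s + b * m - cq' * z) →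
      ∃ z : ℤ, r ∣ s - cq * z

lemma good_one (p p' cq cq' n : ℤ) : Good 1 p p' cq cq' n 1 0 where
  inv := ⟨1, one_dvd _⟩
  w1 := fun m _ => ⟨0, one_dvd _⟩
  w2 := ⟨0, one_dvd _⟩
  w3 := fun κ m _ => ⟨0, one_dvd _⟩
  k := fun s m _ _ => ⟨0, one_dvd _⟩

lemma good_crt {r₁ r₂ p p' cq cq' n γ₁ b₁ γ₂ b₂ : ℤ} (hco : IsCoprime r₁ r₂)
    (G₁ : Good r₁ p p' cq cq' n γ₁ b₁) (G₂ : Good r₂ p p' cq cq' n γ₂ b₂) :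
    ∃ γ b : ℤ, Good (r₁ * r₂) p p' cq cq' n γ b := by
  obtain ⟨u, v, huv⟩ := hco
  have hco' : IsCoprime r₁ r₂ := ⟨u, v, huv⟩
  -- the CRT mix of two integers
  set mix : ℤ → ℤ → ℤ := fun x₁ x₂ => x₁ * (v * r₂) + x₂ * (u * r₁) with hmix
  have hmix1 : ∀ x₁ x₂ : ℤ, r₁ ∣ mix x₁ x₂ - x₁ := by
    intro x₁ x₂
    have : mix x₁ x₂ - x₁ = (x₂ - x₁) * u * r₁ := by
      have h1 : v * r₂ = 1 - u * r₁ := by linarith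
      simp only [hmix]; rw [h1]; ring
    rw [this]; exact Dvd.intro_left _ rfl
  have hmix2 : ∀ x₁ x₂ : ℤ, r₂ ∣ mix x₁ x₂ - x₂ := by
    intro x₁ x₂
    have : mix x₁ x₂ - x₂ = (x₁ - x₂) * v * r₂ := by
      have h1 : u * r₁ = 1 - v * r₂ := by linarith
      simp only [hmix]; rw [h1]; ring
    rw [this]; exact Dvd.intro_left _ rfl
  refine ⟨mix γ₁ γ₂, mix b₁ b₂, ?_, ?_, ?_, ?_, ?_⟩
  · obtain ⟨δ₁, h₁⟩ := G₁.inv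
    obtain ⟨δ₂, h₂⟩ := G₂.inv
    refine ⟨mix δ₁ δ₂, hco'.mul_dvd ?_ ?_⟩
    · have : mix γ₁ γ₂ * mix δ₁ δ₂ - 1 =
        (γ₁ * δ₁ - 1) + (mix γ₁ γ₂ - γ₁) * mix δ₁ δ₂ + γ₁ * (mix δ₁ δ₂ - δ₁) := by ring
      rw [this]
      exact dvd_add (dvd_add h₁ ((hmix1 _ _).mul_right _)) ((hmix1 _ _).mul_left _)
    · have : mix γ₁ γ₂ * mix δ₁ δ₂ - 1 =
        (γ₂ * δ₂ - 1) + (mix γ₁ γ₂ - γ₂) * mix δ₁ δ₂ + γ₂ * (mix δ₁ δ₂ - δ₂) := by ring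
      rw [this]
      exact dvd_add (dvd_add h₂ ((hmix2 _ _).mul_right _)) ((hmix2 _ _).mul_left _)
  · intro m hm
    obtain ⟨z₁, h₁⟩ := G₁.w1 m ((dvd_mul_right r₁ r₂).trans hm)
    obtain ⟨z₂, h₂⟩ := G₂.w1 m ((dvd_mul_left r₂ r₁).trans hm)
    refine ⟨mix z₁ z₂, hco'.mul_dvd ?_ ?_⟩
    · have : mix b₁ b₂ * m - cq' * mix z₁ z₂ =
        (b₁ * m - cq' * z₁) + (mix b₁ b₂ - b₁) * m - cq' * (mix z₁ z₂ - z₁) := by ring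
      rw [this]
      exact dvd_sub (dvd_add h₁ ((hmix1 _ _).mul_right _)) ((hmix1 _ _).mul_left _)
    · have : mix b₁ b₂ * m - cq' * mix z₁ z₂ =
        (b₂ * m - cq' * z₂) + (mix b₁ b₂ - b₂) * m - cq' * (mix z₁ z₂ - z₂) := by ring
      rw [this]
      exact dvd_sub (dvd_add h₂ ((hmix2 _ _).mul_right _)) ((hmix2 _ _).mul_left _)
  · obtain ⟨z₁, h₁⟩ := G₁.w2
    obtain ⟨z₂, h₂⟩ := G₂.w2
    refine ⟨mix z₁ z₂, hco'.mul_dvd ?_ ?_⟩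
    · have : mix γ₁ γ₂ * p + mix b₁ b₂ * n - p' * mix z₁ z₂ =
        (γ₁ * p + b₁ * n - p' * z₁) + (mix γ₁ γ₂ - γ₁) * p + (mix b₁ b₂ - b₁) * n
          - p' * (mix z₁ z₂ - z₁) := by ring
      rw [this]
      exact dvd_sub (dvd_add (dvd_add h₁ ((hmix1 _ _).mul_right _)) ((hmix1 _ _).mul_right _))
        ((hmix1 _ _).mul_left _)
    · have : mix γ₁ γ₂ * p + mix b₁ b₂ * n - p' * mix z₁ z₂ =
        (γ₂ * p + b₂ * n - p' * z₂) + (mix γ₁ γ₂ - γ₂) * p + (mix b₁ b₂ - b₂) * n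
          - p' * (mix z₁ z₂ - z₂) := by ring
      rw [this]
      exact dvd_sub (dvd_add (dvd_add h₂ ((hmix2 _ _).mul_right _)) ((hmix2 _ _).mul_right _))
        ((hmix2 _ _).mul_left _)
  · intro κ m hm
    obtain ⟨z₁, h₁⟩ := G₁.w3 κ m ((dvd_mul_right r₁ r₂).trans hm)
    obtain ⟨z₂, h₂⟩ := G₂.w3 κ m ((dvd_mul_left r₂ r₁).trans hm)
    refine ⟨mix z₁ z₂, hco'.mul_dvd ?_ ?_⟩
    · have : mix γ₁ γ₂ * cq * κ + mix b₁ b₂ * m - cq' * mix z₁ z₂ =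
        (γ₁ * cq * κ + b₁ * m - cq' * z₁) + (mix γ₁ γ₂ - γ₁) * cq * κ
          + (mix b₁ b₂ - b₁) * m - cq' * (mix z₁ z₂ - z₁) := by ring
      rw [this]
      refine dvd_sub (dvd_add (dvd_add h₁ ?_) ((hmix1 _ _).mul_right _)) ((hmix1 _ _).mul_left _)
      exact ((hmix1 _ _).mul_right _).mul_right _
    · have : mix γ₁ γ₂ * cq * κ + mix b₁ b₂ * m - cq' * mix z₁ z₂ =
        (γ₂ * cq * κ + b₂ * m - cq' * z₂) + (mix γ₁ γ₂ - γ₂) * cq * κ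
          + (mix b₁ b₂ - b₂) * m - cq' * (mix z₁ z₂ - z₂) := by ring
      rw [this]
      refine dvd_sub (dvd_add (dvd_add h₂ ?_) ((hmix2 _ _).mul_right _)) ((hmix2 _ _).mul_left _)
      exact ((hmix2 _ _).mul_right _).mul_right _
  · intro s m hm hz
    obtain ⟨z, hzz⟩ := hz
    have hz₁ : ∃ z : ℤ, r₁ ∣ γ₁ * s + b₁ * m - cq' * z := by
      refine ⟨z, ?_⟩
      have : γ₁ * s + b₁ * m - cq' * z =
        (mix γ₁ γ₂ * s + mix b₁ b₂ * m - cq' * z) - (mix γ₁ γ₂ - γ₁) * s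
          - (mix b₁ b₂ - b₁) * m := by ring
      rw [this]
      exact dvd_sub (dvd_sub ((dvd_mul_right r₁ r₂).trans hzz) ((hmix1 _ _).mul_right _))
        ((hmix1 _ _).mul_right _)
    have hz₂ : ∃ z : ℤ, r₂ ∣ γ₂ * s + b₂ * m - cq' * z := by
      refine ⟨z, ?_⟩
      have : γ₂ * s + b₂ * m - cq' * z =
        (mix γ₁ γ₂ * s + mix b₁ b₂ * m - cq' * z) - (mix γ₁ γ₂ - γ₂) * s
          - (mix b₁ b₂ - b₂) * m := by ring
      rw [this]
      exact dvd_sub (dvd_sub ((dvd_mul_left r₂ r₁).trans hzz) ((hmix2 _ _).mul_right _))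
        ((hmix2 _ _).mul_right _)
    obtain ⟨w₁, hw₁⟩ := G₁.k s m ((dvd_mul_right r₁ r₂).trans hm) hz₁
    obtain ⟨w₂, hw₂⟩ := G₂.k s m ((dvd_mul_left r₂ r₁).trans hm) hz₂
    refine ⟨mix w₁ w₂, hco'.mul_dvd ?_ ?_⟩
    · have : s - cq * mix w₁ w₂ = (s - cq * w₁) - cq * (mix w₁ w₂ - w₁) := by ring
      rw [this]; exact dvd_sub hw₁ ((hmix1 _ _).mul_left _)
    · have : s - cq * mix w₁ w₂ = (s - cq * w₂) - cq * (mix w₁ w₂ - w₂) := by ring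
      rw [this]; exact dvd_sub hw₂ ((hmix2 _ _).mul_left _)





lemma Lprime {ℓ : ℕ} (hl : ℓ.Prime) : Prime (ℓ:ℤ) := Nat.prime_iff_prime_int.mp hl

lemma isCoprime_pow_of_not_dvd {ℓ : ℕ} (hl : ℓ.Prime) {u : ℤ} (hu : ¬ (ℓ:ℤ) ∣ u) (c : ℕ) :
    IsCoprime ((ℓ:ℤ)^c) u :=
  IsCoprime.pow_left (((Lprime hl).coprime_iff_not_dvd).mpr hu)

lemma dvd_mul_unit {ℓ : ℕ} (hl : ℓ.Prime) {c : ℕ} {y u : ℤ} (hu : ¬ (ℓ:ℤ) ∣ u) :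
    (ℓ:ℤ)^c ∣ y * u ↔ (ℓ:ℤ)^c ∣ y :=
  ⟨fun h => (isCoprime_pow_of_not_dvd hl hu c).dvd_of_dvd_mul_right h, fun h => h.mul_right u⟩

lemma pow_dvd_pow_mul_iff {ℓ : ℕ} (hl : ℓ.Prime) {a c : ℕ} (hac : a ≤ c) (y : ℤ) :
    (ℓ:ℤ)^c ∣ (ℓ:ℤ)^a * y ↔ (ℓ:ℤ)^(c-a) ∣ y := by
  conv_lhs => rw [show c = a + (c - a) by omega, pow_add]
  exact mul_dvd_mul_iff_left (pow_ne_zero a (by exact_mod_cast hl.ne_zero))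

lemma exists_inv_mod {ℓ : ℕ} (hl : ℓ.Prime) {e : ℕ} (he : 0 < e) {x : ℤ} (hx : ¬ (ℓ:ℤ) ∣ x) :
    ∃ w : ℤ, ¬ (ℓ:ℤ) ∣ w ∧ (ℓ:ℤ)^e ∣ x * w - 1 := by
  obtain ⟨a, b, hab⟩ := (isCoprime_pow_of_not_dvd hl hx e).symm
  refine ⟨a, ?_, ?_⟩
  · intro hcon
    have h1 : (ℓ:ℤ) ∣ a * x := hcon.mul_right x
    have h2 : (ℓ:ℤ) ∣ b * (ℓ:ℤ)^e := (dvd_pow_self (ℓ:ℤ) he.ne').mul_left b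
    have : (ℓ:ℤ) ∣ 1 := hab ▸ dvd_add h1 h2
    exact (Lprime hl).not_dvd_one this
  · have : x * a - 1 = -(b * (ℓ:ℤ)^e) := by linarith [hab]
    rw [this]
    exact dvd_neg.mpr (Dvd.intro_left b rfl)

lemma reach {ℓ : ℕ} {e : ℕ} {uu w : ℤ} (hw : (ℓ:ℤ)^e ∣ uu * w - 1) {C : ℕ} {Y : ℤ}
    (h : (ℓ:ℤ)^C ∣ Y) : ∃ z : ℤ, (ℓ:ℤ)^e ∣ Y - ((ℓ:ℤ)^C * uu) * z := by
  obtain ⟨Y₂, rfl⟩ := h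
  refine ⟨w * Y₂, ?_⟩
  have : (ℓ:ℤ)^C * Y₂ - ((ℓ:ℤ)^C * uu) * (w * Y₂) = -(((ℓ:ℤ)^C * Y₂) * (uu * w - 1)) := by ring
  rw [this]
  exact dvd_neg.mpr (hw.mul_left _)

lemma exists_val {ℓ : ℕ} (hl : ℓ.Prime) {s : ℤ} (hs : s ≠ 0) :
    ∃ (v : ℕ) (s₁ : ℤ), ¬ (ℓ:ℤ) ∣ s₁ ∧ s = (ℓ:ℤ)^v * s₁ := by
  obtain ⟨v, m, hm, habs⟩ :=
    Nat.exists_eq_pow_mul_and_not_dvd (Int.natAbs_ne_zero.mpr hs) ℓ hl.ne_one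
  have hmz : ¬ (ℓ:ℤ) ∣ (m:ℤ) := fun h => hm (Int.natCast_dvd_natCast.mp h)
  rcases Int.natAbs_eq s with h | h
  · exact ⟨v, m, hmz, by rw [h, habs]; push_cast; ring⟩
  · refine ⟨v, -(m:ℤ), fun hc => hmz (dvd_neg.mp hc), ?_⟩
    rw [h, habs]; push_cast; ring

lemma extract {ℓ : ℕ} {e C' : ℕ} (hC' : C' ≤ e) {X q₀' z : ℤ}
    (hz : (ℓ:ℤ)^e ∣ X - ((ℓ:ℤ)^C' * q₀') * z) : (ℓ:ℤ)^C' ∣ X := by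
  have h : X = (X - ((ℓ:ℤ)^C' * q₀')*z) + ((ℓ:ℤ)^C' * q₀')*z := by ring
  rw [h]
  exact dvd_add ((pow_dvd_pow _ hC').trans hz) ((dvd_mul_right _ _).mul_right _)

lemma split_m {ℓ : ℕ} (hl : ℓ.Prime) {e A D : ℕ} (hAD : A ≤ D) (hDe : D ≤ e)
    {p₀ m R₀ : ℤ} (hp0 : ¬(ℓ:ℤ) ∣ p₀)
    (h : (ℓ:ℤ)^e ∣ ((ℓ:ℤ)^A * p₀) * m - (ℓ:ℤ)^D * R₀) :
    ∃ m₂ : ℤ, m = (ℓ:ℤ)^(D-A) * m₂ ∧ (ℓ:ℤ)^(e-D) ∣ p₀ * m₂ - R₀ := by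
  have h1 : (ℓ:ℤ)^D ∣ ((ℓ:ℤ)^A * p₀) * m := by
    have h2 : (ℓ:ℤ)^D ∣ ((ℓ:ℤ)^A * p₀) * m - (ℓ:ℤ)^D * R₀ := (pow_dvd_pow _ hDe).trans h
    have h3 := dvd_add h2 (dvd_mul_right ((ℓ:ℤ)^D) R₀)
    simpa using h3
  rw [mul_assoc, pow_dvd_pow_mul_iff hl hAD, mul_comm p₀ m, dvd_mul_unit hl hp0] at h1
  obtain ⟨m₂, hm₂⟩ := h1
  refine ⟨m₂, hm₂, ?_⟩
  have hpow : ((ℓ:ℤ))^D = (ℓ:ℤ)^A * (ℓ:ℤ)^(D-A) := by rw [← pow_add]; congr 1; omega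
  have h4 : ((ℓ:ℤ)^A * p₀) * m - (ℓ:ℤ)^D * R₀ = (ℓ:ℤ)^D * (p₀ * m₂ - R₀) := by
    rw [hm₂, hpow]; ring
  rw [h4, pow_dvd_pow_mul_iff hl hDe] at h
  exact h

lemma m_split_exact {ℓ : ℕ} (hl : ℓ.Prime) {e A N v : ℕ} {p₀ n₀ s₁ m : ℤ}
    (hp0 : ¬(ℓ:ℤ) ∣ p₀) (hn0 : ¬(ℓ:ℤ) ∣ n₀) (hs₁ : ¬(ℓ:ℤ) ∣ s₁)
    (hNv : N + v < e)
    (hm : (ℓ:ℤ)^e ∣ ((ℓ:ℤ)^A * p₀) * m - ((ℓ:ℤ)^N * n₀) * ((ℓ:ℤ)^v * s₁)) :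
    A ≤ N + v ∧ ∃ m₂ : ℤ, m = (ℓ:ℤ)^(N+v-A) * m₂ ∧ ¬(ℓ:ℤ) ∣ m₂ ∧
      (ℓ:ℤ)^(e-(N+v)) ∣ p₀ * m₂ - n₀ * s₁ := by
  have hns : ((ℓ:ℤ)^N * n₀) * ((ℓ:ℤ)^v * s₁) = (ℓ:ℤ)^(N+v) * (n₀ * s₁) := by
    rw [pow_add]; ring
  rw [hns] at hm
  have hpm : (ℓ:ℤ)^(N+v) ∣ ((ℓ:ℤ)^A * p₀) * m := by
    have h2 := dvd_add ((pow_dvd_pow (ℓ:ℤ) hNv.le).trans hm)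
      (dvd_mul_right ((ℓ:ℤ)^(N+v)) (n₀ * s₁))
    simpa using h2
  have hpm2 : ¬ (ℓ:ℤ)^(N+v+1) ∣ ((ℓ:ℤ)^A * p₀) * m := by
    intro hcon
    have h2 : (ℓ:ℤ)^(N+v+1) ∣ (ℓ:ℤ)^(N+v) * (n₀ * s₁) := by
      have h3 := dvd_sub hcon ((pow_dvd_pow (ℓ:ℤ) (by omega)).trans hm)
      simpa using h3
    rw [pow_dvd_pow_mul_iff hl (by omega)] at h2
    rw [show N+v+1-(N+v) = 1 by omega, pow_one] at h2
    rcases (Lprime hl).dvd_mul.mp h2 with h | h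
    exacts [hn0 h, hs₁ h]
  have hA : A ≤ N + v := by
    by_contra hcon
    exact hpm2 (((pow_dvd_pow (ℓ:ℤ) (by omega : N+v+1 ≤ A)).mul_right p₀).mul_right m)
  have hmd : (ℓ:ℤ)^(N+v-A) ∣ m := by
    rw [mul_assoc, pow_dvd_pow_mul_iff hl hA, mul_comm p₀ m, dvd_mul_unit hl hp0] at hpm
    exact hpm
  obtain ⟨m₂, hm₂⟩ := hmd
  have hm₂nd : ¬ (ℓ:ℤ) ∣ m₂ := by
    rintro ⟨m₃, hm₃⟩
    apply hpm2
    have hpow2 : ((ℓ:ℤ))^(N+v+1) = (ℓ:ℤ)^A * (ℓ:ℤ)^(N+v-A) * (ℓ:ℤ) := by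
      rw [mul_assoc, show ((ℓ:ℤ)^(N+v-A) * (ℓ:ℤ)) = (ℓ:ℤ)^(N+v-A+1) by rw [pow_succ],
        ← pow_add]
      congr 1; omega
    have h5 : ((ℓ:ℤ)^A * p₀) * m = (ℓ:ℤ)^(N+v+1) * (p₀ * m₃) := by
      rw [hm₂, hm₃, hpow2]; ring
    rw [h5]
    exact dvd_mul_right _ _
  refine ⟨hA, m₂, hm₂, hm₂nd, ?_⟩
  have hpow3 : ((ℓ:ℤ))^(N+v) = (ℓ:ℤ)^A * (ℓ:ℤ)^(N+v-A) := by rw [← pow_add]; congr 1; omega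
  have h6 : ((ℓ:ℤ)^A * p₀) * m = (ℓ:ℤ)^(N+v) * (p₀ * m₂) := by
    rw [hm₂, hpow3]; ring
  rw [h6, ← mul_sub, pow_dvd_pow_mul_iff hl hNv.le] at hm
  exact hm


set_option maxHeartbeats 1000000 in
lemma local_good {ℓ : ℕ} (hl : ℓ.Prime) {e A A' B B' N : ℕ} (he : 0 < e)
    {p₀ p₀' q₀ q₀' n₀ : ℤ}
    (hp0 : ¬(ℓ:ℤ) ∣ p₀) (hp0' : ¬(ℓ:ℤ) ∣ p₀') (hq0 : ¬(ℓ:ℤ) ∣ q₀)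
    (hq0' : ¬(ℓ:ℤ) ∣ q₀') (hn0 : ¬(ℓ:ℤ) ∣ n₀)
    (hAB : A + B = A' + B') (hmin1 : min A N = min A' N) (hmin2 : min B N = min B' N)
    (hle : A + B ≤ e + N) (hA : A ≤ e) (hA' : A' ≤ e) (hB : B ≤ e) (hB' : B' ≤ e) :
    ∃ γ b : ℤ, Good ((ℓ:ℤ)^e) ((ℓ:ℤ)^A * p₀) ((ℓ:ℤ)^A' * p₀') ((ℓ:ℤ)^(e-B) * q₀)
      ((ℓ:ℤ)^(e-B') * q₀') ((ℓ:ℤ)^N * n₀) γ b := by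
  obtain ⟨wp, hwp0, hwp⟩ := exists_inv_mod hl he hp0
  obtain ⟨wp', hwp0', hwp'⟩ := exists_inv_mod hl he hp0'
  obtain ⟨wq, hwq0, hwq⟩ := exists_inv_mod hl he hq0
  obtain ⟨wq', hwq0', hwq'⟩ := exists_inv_mod hl he hq0'
  rcases Nat.lt_trichotomy A A' with hc | hc | hc
  · -- CASE 3 : A < A'
    have hN1 : N ≤ A := by omega
    have hBB : B' < B := by omega
    have hN2 : N ≤ B' := by omega
    obtain ⟨t, ht⟩ := hwp
    refine ⟨(-n₀ + (ℓ:ℤ)^(A'-A)) * wp, (ℓ:ℤ)^(A-N), ?_, ?_, ?_, ?_, ?_⟩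
    · -- inv
      have hγ1 : ¬ (ℓ:ℤ) ∣ (-n₀ + (ℓ:ℤ)^(A'-A)) := by
        intro hcon
        apply hn0
        have h1 : (ℓ:ℤ) ∣ (ℓ:ℤ)^(A'-A) := dvd_pow_self _ (by omega : A'-A ≠ 0)
        have h2 := dvd_sub h1 hcon
        simpa using h2
      have hγnd : ¬ (ℓ:ℤ) ∣ ((-n₀ + (ℓ:ℤ)^(A'-A)) * wp) := by
        intro hcon
        rcases (Lprime hl).dvd_mul.mp hcon with h | h
        exacts [hγ1 h, hwp0 h]
      obtain ⟨δ, _, hδ⟩ := exists_inv_mod hl he hγnd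
      exact ⟨δ, hδ⟩
    · -- w1
      intro m hm
      obtain ⟨m₂, hm₂, -⟩ := split_m hl hA le_rfl hp0
        (show (ℓ:ℤ)^e ∣ ((ℓ:ℤ)^A*p₀)*m - (ℓ:ℤ)^e*0 by simpa using hm)
      refine reach hwq' ?_
      have h1 : (ℓ:ℤ)^(A-N) * m = (ℓ:ℤ)^((A-N)+(e-A)) * m₂ := by
        rw [hm₂, pow_add]; ring
      rw [h1]
      exact (pow_dvd_pow _ (by omega : e-B' ≤ (A-N)+(e-A))).mul_right m₂
    · -- w2
      have f2 : ((ℓ:ℤ))^(A') = (ℓ:ℤ)^A * (ℓ:ℤ)^(A'-A) := by rw [← pow_add]; congr 1; omega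
      have f3 : ((ℓ:ℤ))^(A-N) * (ℓ:ℤ)^N = (ℓ:ℤ)^A := by rw [← pow_add]; congr 1; omega
      have hY : ((-n₀ + (ℓ:ℤ)^(A'-A)) * wp) * ((ℓ:ℤ)^A * p₀) + (ℓ:ℤ)^(A-N) * ((ℓ:ℤ)^N * n₀)
          = (ℓ:ℤ)^(A') + ((ℓ:ℤ)^A * (ℓ:ℤ)^e) * ((-n₀ + (ℓ:ℤ)^(A'-A)) * t) := by
        rw [f2, ← f3]
        linear_combination ((ℓ:ℤ)^(A-N) * (ℓ:ℤ)^N * (-n₀ + (ℓ:ℤ)^(A'-A))) * ht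
      refine reach hwp' ?_
      rw [hY]
      refine dvd_add dvd_rfl ?_
      have h2 : (ℓ:ℤ)^(A') ∣ (ℓ:ℤ)^A * (ℓ:ℤ)^e := by
        rw [← pow_add]; exact pow_dvd_pow _ (by omega)
      exact h2.mul_right _
    · -- w3
      intro κ m hm
      have hD : (e-B)+N ≤ e := by omega
      have hAD : A ≤ (e-B)+N := by omega
      have hrw : ((ℓ:ℤ)^(e-B) * q₀) * ((ℓ:ℤ)^N * n₀) * κ = (ℓ:ℤ)^((e-B)+N) * (q₀ * n₀ * κ) := by
        rw [pow_add]; ring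
      rw [hrw] at hm
      obtain ⟨m₂, hm₂, hcong⟩ := split_m hl hAD hD hp0 hm
      obtain ⟨Δ, hΔ⟩ := hcong
      have hpw : ((ℓ:ℤ))^(A-N) * (ℓ:ℤ)^(((e-B)+N)-A) = (ℓ:ℤ)^(e-B) := by
        rw [← pow_add]; congr 1; omega
      have hbm : (ℓ:ℤ)^(A-N) * m = (ℓ:ℤ)^(e-B) * m₂ := by
        rw [hm₂, ← hpw]; ring
      refine reach hwq' ?_
      have hfull : ((-n₀ + (ℓ:ℤ)^(A'-A)) * wp) * ((ℓ:ℤ)^(e-B) * q₀) * κ + (ℓ:ℤ)^(A-N) * m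
          = ((ℓ:ℤ)^(e-B) * (ℓ:ℤ)^(A'-A)) * (q₀*κ*wp)
            + ((ℓ:ℤ)^(e-B) * (ℓ:ℤ)^(e-((e-B)+N))) * (wp*Δ)
            - ((ℓ:ℤ)^(e-B) * (ℓ:ℤ)^e) * (t*m₂) := by
        rw [hbm]
        linear_combination ((ℓ:ℤ)^(e-B) * wp) * hΔ + (-((ℓ:ℤ)^(e-B) * m₂)) * ht
      rw [hfull]
      refine dvd_sub (dvd_add ?_ ?_) ?_
      · exact (by rw [← pow_add]; exact pow_dvd_pow _ (by omega) :
          (ℓ:ℤ)^(e-B') ∣ (ℓ:ℤ)^(e-B) * (ℓ:ℤ)^(A'-A)).mul_right _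
      · exact (by rw [← pow_add]; exact pow_dvd_pow _ (by omega) :
          (ℓ:ℤ)^(e-B') ∣ (ℓ:ℤ)^(e-B) * (ℓ:ℤ)^(e-((e-B)+N))).mul_right _
      · exact (by rw [← pow_add]; exact pow_dvd_pow _ (by omega) :
          (ℓ:ℤ)^(e-B') ∣ (ℓ:ℤ)^(e-B) * (ℓ:ℤ)^e).mul_right _
    · -- k
      intro s m hm hz
      obtain ⟨z, hz⟩ := hz
      by_cases hs0 : s = 0
      · exact reach hwq (by simp [hs0])
      obtain ⟨v, s₁, hs₁, hsv⟩ := exists_val hl hs0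
      by_cases hvC : e - B ≤ v
      · exact reach hwq (by rw [hsv]; exact (pow_dvd_pow _ hvC).mul_right _)
      push_neg at hvC
      exfalso
      have hNv : N + v < e := by omega
      rw [hsv] at hm
      obtain ⟨hA2, m₂, hm₂, hm₂nd, hcong⟩ := m_split_exact hl hp0 hn0 hs₁ hNv hm
      obtain ⟨Δ, hΔ⟩ := hcong
      have hC's : (ℓ:ℤ)^(e-B') ∣
          ((-n₀ + (ℓ:ℤ)^(A'-A)) * wp) * s + (ℓ:ℤ)^(A-N) * m := extract (by omega) hz
      by_cases hEC : e - B' ≤ v + (A'-A)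
      · omega
      push_neg at hEC
      have f1 : ((ℓ:ℤ))^(A-N) * (ℓ:ℤ)^(N+v-A) = (ℓ:ℤ)^v := by
        rw [← pow_add]; congr 1; omega
      have hsum : ((-n₀ + (ℓ:ℤ)^(A'-A)) * wp) * s + (ℓ:ℤ)^(A-N) * m
          = (ℓ:ℤ)^v * ((ℓ:ℤ)^(A'-A)*(s₁*wp) + (ℓ:ℤ)^(e-(N+v))*(wp*Δ) - (ℓ:ℤ)^e*(t*m₂)) := by
        rw [hsv, hm₂]
        linear_combination ((ℓ:ℤ)^v * wp) * hΔ + (-((ℓ:ℤ)^v * m₂)) * ht + m₂ * f1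
      have h7 : (ℓ:ℤ)^(v+(A'-A)+1) ∣
          ((-n₀ + (ℓ:ℤ)^(A'-A)) * wp) * s + (ℓ:ℤ)^(A-N) * m :=
        (pow_dvd_pow _ (by omega)).trans hC's
      have h9 : (ℓ:ℤ)^v * ((ℓ:ℤ)^(A'-A)*(s₁*wp))
          = (((-n₀ + (ℓ:ℤ)^(A'-A)) * wp) * s + (ℓ:ℤ)^(A-N) * m)
            - (ℓ:ℤ)^v*((ℓ:ℤ)^(e-(N+v))*(wp*Δ)) + (ℓ:ℤ)^v*((ℓ:ℤ)^e*(t*m₂)) := by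
        rw [hsum]; ring
      have h8 : (ℓ:ℤ)^(v+(A'-A)+1) ∣ (ℓ:ℤ)^v * ((ℓ:ℤ)^(A'-A)*(s₁*wp)) := by
        rw [h9]
        refine dvd_add (dvd_sub h7 ?_) ?_
        · have hh : (ℓ:ℤ)^v*((ℓ:ℤ)^(e-(N+v))*(wp*Δ)) = (ℓ:ℤ)^(v+(e-(N+v)))*(wp*Δ) := by
            rw [pow_add]; ring
          rw [hh]
          exact (pow_dvd_pow _ (by omega)).mul_right _
        · have hh : (ℓ:ℤ)^v*((ℓ:ℤ)^e*(t*m₂)) = (ℓ:ℤ)^(v+e)*(t*m₂) := by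
            rw [pow_add]; ring
          rw [hh]
          exact (pow_dvd_pow _ (by omega)).mul_right _
      have hh2 : (ℓ:ℤ)^v * ((ℓ:ℤ)^(A'-A)*(s₁*wp)) = (ℓ:ℤ)^(v+(A'-A))*(s₁*wp) := by
        rw [pow_add]; ring
      rw [hh2, pow_dvd_pow_mul_iff hl (by omega),
        show v+(A'-A)+1-(v+(A'-A)) = 1 by omega, pow_one] at h8
      rcases (Lprime hl).dvd_mul.mp h8 with h | h
      exacts [hs₁ h, hwp0 h]
  · -- CASE 1 : A = A'
    have hBB : B = B' := by omega
    refine ⟨1, 0, ⟨1, by simp⟩, fun m _ => ⟨0, by simp⟩, ?_, ?_, ?_⟩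
    · -- w2
      refine reach hwp' ?_
      have h1 : (ℓ:ℤ)^(A') ∣ (ℓ:ℤ)^A * p₀ := (pow_dvd_pow _ (le_of_eq hc.symm)).mul_right p₀
      simpa using h1
    · -- w3
      intro κ m hm
      refine reach hwq' ?_
      have h1 : (ℓ:ℤ)^(e-B') ∣ ((ℓ:ℤ)^(e-B) * q₀) * κ :=
        ((pow_dvd_pow _ (by omega : e-B' ≤ e-B)).mul_right q₀).mul_right κ
      simpa using h1
    · -- k
      intro s m hm hz
      obtain ⟨z, hz⟩ := hz
      have hCs : (ℓ:ℤ)^(e-B') ∣ 1*s + 0*m := extract (by omega) hz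
      refine reach hwq ?_
      rw [show e-B = e-B' by omega]
      simpa using hCs
  · -- CASE 2 : A' < A
    have hN1 : N ≤ A' := by omega
    have hBB : B < B' := by omega
    have hN2 : N ≤ B := by omega
    refine ⟨1, (ℓ:ℤ)^(A'-N), ⟨1, by simp⟩, ?_, ?_, ?_, ?_⟩
    · -- w1
      intro m hm
      obtain ⟨m₂, hm₂, -⟩ := split_m hl hA le_rfl hp0
        (show (ℓ:ℤ)^e ∣ ((ℓ:ℤ)^A*p₀)*m - (ℓ:ℤ)^e*0 by simpa using hm)
      refine reach hwq' ?_
      have h1 : (ℓ:ℤ)^(A'-N) * m = (ℓ:ℤ)^((A'-N)+(e-A)) * m₂ := by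
        rw [hm₂, pow_add]; ring
      rw [h1]
      exact (pow_dvd_pow _ (by omega : e-B' ≤ (A'-N)+(e-A))).mul_right m₂
    · -- w2
      refine reach hwp' ?_
      refine dvd_add ?_ ?_
      · have h1 : (ℓ:ℤ)^(A') ∣ (ℓ:ℤ)^A * p₀ := (pow_dvd_pow _ hc.le).mul_right p₀
        simpa using h1
      · have h1 : (ℓ:ℤ)^(A'-N) * ((ℓ:ℤ)^N * n₀) = (ℓ:ℤ)^((A'-N)+N) * n₀ := by
          rw [pow_add]; ring
        rw [h1, show (A'-N)+N = A' by omega]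
        exact dvd_mul_right _ _
    · -- w3
      intro κ m hm
      have hD : min ((e-B)+N) e ≤ e := min_le_right _ _
      have hAD : A ≤ min ((e-B)+N) e := by omega
      have hpw : ((ℓ:ℤ))^(e-B) * (ℓ:ℤ)^N
          = (ℓ:ℤ)^(min ((e-B)+N) e) * (ℓ:ℤ)^(((e-B)+N) - min ((e-B)+N) e) := by
        rw [← pow_add, ← pow_add]; congr 1; omega
      have hrw : ((ℓ:ℤ)^(e-B) * q₀) * ((ℓ:ℤ)^N * n₀) * κ
          = (ℓ:ℤ)^(min ((e-B)+N) e) * ((ℓ:ℤ)^(((e-B)+N) - min ((e-B)+N) e) * (q₀ * n₀ * κ)) := by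
        calc ((ℓ:ℤ)^(e-B) * q₀) * ((ℓ:ℤ)^N * n₀) * κ
            = ((ℓ:ℤ)^(e-B) * (ℓ:ℤ)^N) * (q₀ * n₀ * κ) := by ring
          _ = _ := by rw [hpw]; ring
      rw [hrw] at hm
      obtain ⟨m₂, hm₂, -⟩ := split_m hl hAD hD hp0 hm
      refine reach hwq' ?_
      refine dvd_add ?_ ?_
      · have h1 : (ℓ:ℤ)^(e-B') ∣ ((ℓ:ℤ)^(e-B) * q₀) * κ :=
          ((pow_dvd_pow _ (by omega : e-B' ≤ e-B)).mul_right q₀).mul_right κ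
        simpa using h1
      · have h1 : (ℓ:ℤ)^(A'-N) * m = (ℓ:ℤ)^((A'-N)+((min ((e-B)+N) e)-A)) * m₂ := by
          rw [hm₂, pow_add]; ring
        rw [h1]
        exact (pow_dvd_pow _ (by omega : e-B' ≤ (A'-N)+((min ((e-B)+N) e)-A))).mul_right m₂
    · -- k
      intro s m hm hz
      obtain ⟨z, hz⟩ := hz
      by_cases hs0 : s = 0
      · exact reach hwq (by simp [hs0])
      obtain ⟨v, s₁, hs₁, hsv⟩ := exists_val hl hs0
      by_cases hvC : e - B ≤ v
      · exact reach hwq (by rw [hsv]; exact (pow_dvd_pow _ hvC).mul_right _)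
      push_neg at hvC
      exfalso
      have hNv : N + v < e := by omega
      rw [hsv] at hm
      obtain ⟨hA2, m₂, hm₂, hm₂nd, hcong⟩ := m_split_exact hl hp0 hn0 hs₁ hNv hm
      have hC's : (ℓ:ℤ)^(e-B') ∣ 1 * s + (ℓ:ℤ)^(A'-N) * m := extract (by omega) hz
      by_cases hEC : e - B' ≤ (A'-N)+(N+v-A)
      · omega
      push_neg at hEC
      have f1 : ((ℓ:ℤ))^(A'-N) * (ℓ:ℤ)^(N+v-A) = (ℓ:ℤ)^((A'-N)+(N+v-A)) := by
        rw [← pow_add]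
      have f2 : ((ℓ:ℤ))^((A'-N)+(N+v-A)) * (ℓ:ℤ)^(v-((A'-N)+(N+v-A))) = (ℓ:ℤ)^v := by
        rw [← pow_add]; congr 1; omega
      have hsum : (1:ℤ) * s + (ℓ:ℤ)^(A'-N) * m
          = (ℓ:ℤ)^((A'-N)+(N+v-A)) * ((ℓ:ℤ)^(v-((A'-N)+(N+v-A)))*s₁ + m₂) := by
        rw [hsv, hm₂]
        linear_combination (-s₁) * f2 + m₂ * f1
      have h7 : (ℓ:ℤ)^(((A'-N)+(N+v-A))+1) ∣ (1:ℤ) * s + (ℓ:ℤ)^(A'-N) * m :=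
        (pow_dvd_pow _ (by omega)).trans hC's
      rw [hsum, pow_dvd_pow_mul_iff hl (by omega),
        show ((A'-N)+(N+v-A))+1-((A'-N)+(N+v-A)) = 1 by omega, pow_one] at h7
      have h8 : (ℓ:ℤ) ∣ m₂ := by
        have h9 : (ℓ:ℤ) ∣ (ℓ:ℤ)^(v-((A'-N)+(N+v-A)))*s₁ :=
          (dvd_pow_self (ℓ:ℤ) (by omega : v-((A'-N)+(N+v-A)) ≠ 0)).mul_right s₁
        have h10 := dvd_sub h7 h9
        simpa using h10
      exact hm₂nd h8

lemma natdvd_int {a : ℕ} {b : ℕ} (h : ¬ a ∣ b) : ¬ (a:ℤ) ∣ (b:ℤ) :=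
  fun hc => h (Int.natCast_dvd_natCast.mp hc)

lemma exists_good_aux (R p p' q q' n : ℕ) (hR : 0 < R) (hn : 0 < n)
    (hp : p ∣ R) (hp' : p' ∣ R) (hq : q ∣ R) (hq' : q' ∣ R)
    (hprod : p * q = p' * q') (hdvd : p * q ∣ R * n)
    (h1 : Nat.gcd p n = Nat.gcd p' n) (h2 : Nat.gcd q n = Nat.gcd q' n) :
    ∀ r', r' ∣ R → Nat.Coprime r' (R / r') →
      ∃ γ b : ℤ, Good (r':ℤ) (p:ℤ) (p':ℤ) ((R/q : ℕ):ℤ) ((R/q' : ℕ):ℤ) (n:ℤ) γ b := by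
  have hppos : 0 < p := Nat.pos_of_dvd_of_pos hp hR
  have hp'pos : 0 < p' := Nat.pos_of_dvd_of_pos hp' hR
  have hqpos : 0 < q := Nat.pos_of_dvd_of_pos hq hR
  have hq'pos : 0 < q' := Nat.pos_of_dvd_of_pos hq' hR
  have hcqpos : 0 < R / q := Nat.div_pos (Nat.le_of_dvd hR hq) hqpos
  have hcq'pos : 0 < R / q' := Nat.div_pos (Nat.le_of_dvd hR hq') hq'pos
  intro r'
  induction r' using Nat.strong_induction_on with
  | _ r' ih =>
    intro hr'R hco
    rcases eq_or_ne r' 1 with rfl | hne1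
    · refine ⟨1, 0, ?_⟩
      rw [Nat.cast_one]
      exact good_one _ _ _ _ _
    have hr'0 : 0 < r' := Nat.pos_of_dvd_of_pos hr'R hR
    set ℓ := r'.minFac with hℓdef
    have hlp : ℓ.Prime := Nat.minFac_prime hne1
    have hldvd : ℓ ∣ r' := Nat.minFac_dvd r'
    have hRr'pos : 0 < R / r' := Nat.div_pos (Nat.le_of_dvd hR hr'R) hr'0
    -- vℓ(R) = vℓ(r')
    have hvR : R.factorization ℓ = r'.factorization ℓ := by
      have hR2 : R = r' * (R / r') := (Nat.mul_div_cancel' hr'R).symm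
      have h4 : (R / r').factorization ℓ = 0 := by
        apply Nat.factorization_eq_zero_of_not_dvd
        intro hcon
        have h5 : ℓ ∣ Nat.gcd r' (R / r') := Nat.dvd_gcd hldvd hcon
        rw [Nat.Coprime.gcd_eq_one hco] at h5
        exact hlp.ne_one (Nat.dvd_one.mp h5)
      rw [hR2, Nat.factorization_mul hr'0.ne' hRr'pos.ne', Finsupp.add_apply, h4, add_zero]
    set e := r'.factorization ℓ with hedef
    have he : 0 < e := hlp.factorization_pos_of_dvd hr'0.ne' hldvd
    -- split r'
    set r₂ := ordCompl[ℓ] r' with hr₂def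
    have hr₂pos : 0 < r₂ := Nat.ordCompl_pos ℓ hr'0.ne'
    have hsplit : ℓ ^ e * r₂ = r' := Nat.ordProj_mul_ordCompl_eq_self r' ℓ
    have hr₂dvd : r₂ ∣ r' := Nat.ordCompl_dvd r' ℓ
    have hr₂R : r₂ ∣ R := hr₂dvd.trans hr'R
    have hcop : Nat.Coprime (ℓ ^ e) r₂ := (Nat.coprime_ordCompl hlp hr'0.ne').pow_left e
    have hr₂co : Nat.Coprime r₂ (R / r₂) := by
      have hRr₂ : R / r₂ = ℓ ^ e * (R / r') := by
        have h6 : R = r₂ * (ℓ ^ e * (R / r')) := by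
          rw [← mul_assoc, mul_comm r₂ (ℓ ^ e), hsplit, Nat.mul_div_cancel' hr'R]
        exact Nat.div_eq_of_eq_mul_right hr₂pos h6
      rw [hRr₂]
      exact Nat.Coprime.mul_right ((Nat.coprime_ordCompl hlp hr'0.ne').symm.pow_right e)
        (Nat.Coprime.coprime_dvd_left hr₂dvd hco)
    have hr₂lt : r₂ < r' := by
      have h7 : 2 ≤ ℓ ^ e := by
        calc 2 ≤ ℓ := hlp.two_le
        _ = ℓ ^ 1 := (pow_one ℓ).symm
        _ ≤ ℓ ^ e := Nat.pow_le_pow_right hlp.pos he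
      have h8 : 2 * r₂ ≤ ℓ ^ e * r₂ := Nat.mul_le_mul_right r₂ h7
      omega
    obtain ⟨γ₂, b₂, G₂⟩ := ih r₂ hr₂lt hr₂R hr₂co
    -- arithmetic data at ℓ
    have hfA : p.factorization ℓ ≤ e := by
      rw [← hvR]
      exact Finsupp.le_def.mp ((Nat.factorization_le_iff_dvd hppos.ne' hR.ne').mpr hp) ℓ
    have hfA' : p'.factorization ℓ ≤ e := by
      rw [← hvR]
      exact Finsupp.le_def.mp ((Nat.factorization_le_iff_dvd hp'pos.ne' hR.ne').mpr hp') ℓ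
    have hfB : q.factorization ℓ ≤ e := by
      rw [← hvR]
      exact Finsupp.le_def.mp ((Nat.factorization_le_iff_dvd hqpos.ne' hR.ne').mpr hq) ℓ
    have hfB' : q'.factorization ℓ ≤ e := by
      rw [← hvR]
      exact Finsupp.le_def.mp ((Nat.factorization_le_iff_dvd hq'pos.ne' hR.ne').mpr hq') ℓ
    have hfAB : p.factorization ℓ + q.factorization ℓ
        = p'.factorization ℓ + q'.factorization ℓ := by
      have h3 := Nat.factorization_mul hppos.ne' hqpos.ne'
      have h4 := Nat.factorization_mul hp'pos.ne' hq'pos.ne'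
      have h5 := congrArg (fun f : ℕ →₀ ℕ => f ℓ) (h3.symm.trans (by rw [hprod, h4]))
      simpa using h5
    have hfmin1 : min (p.factorization ℓ) (n.factorization ℓ)
        = min (p'.factorization ℓ) (n.factorization ℓ) := by
      have h3 := Nat.factorization_gcd hppos.ne' hn.ne'
      have h4 := Nat.factorization_gcd hp'pos.ne' hn.ne'
      have h5 := congrArg (fun f : ℕ →₀ ℕ => f ℓ) (h3.symm.trans (by rw [h1, h4]))
      simpa [Finsupp.inf_apply] using h5
    have hfmin2 : min (q.factorization ℓ) (n.factorization ℓ)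
        = min (q'.factorization ℓ) (n.factorization ℓ) := by
      have h3 := Nat.factorization_gcd hqpos.ne' hn.ne'
      have h4 := Nat.factorization_gcd hq'pos.ne' hn.ne'
      have h5 := congrArg (fun f : ℕ →₀ ℕ => f ℓ) (h3.symm.trans (by rw [h2, h4]))
      simpa [Finsupp.inf_apply] using h5
    have hfle : p.factorization ℓ + q.factorization ℓ ≤ e + n.factorization ℓ := by
      have h3 := (Nat.factorization_le_iff_dvd (by positivity) (by positivity : R*n ≠ 0)).mpr hdvd
      have h4 := Finsupp.le_def.mp h3 ℓ
      rw [Nat.factorization_mul hppos.ne' hqpos.ne', Nat.factorization_mul hR.ne' hn.ne',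
        Finsupp.add_apply, Finsupp.add_apply, hvR] at h4
      exact h4
    -- decompositions at ℓ
    have hqef : (R/q).factorization ℓ = e - q.factorization ℓ := by
      rw [Nat.factorization_div hq, Finsupp.tsub_apply, hvR]
    have hq'ef : (R/q').factorization ℓ = e - q'.factorization ℓ := by
      rw [Nat.factorization_div hq', Finsupp.tsub_apply, hvR]
    have hpe : (p:ℤ) = (ℓ:ℤ)^(p.factorization ℓ) * ((ordCompl[ℓ] p : ℕ) : ℤ) := by
      exact_mod_cast (Nat.ordProj_mul_ordCompl_eq_self p ℓ).symm
    have hpe' : (p':ℤ) = (ℓ:ℤ)^(p'.factorization ℓ) * ((ordCompl[ℓ] p' : ℕ) : ℤ) := by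
      exact_mod_cast (Nat.ordProj_mul_ordCompl_eq_self p' ℓ).symm
    have hne : (n:ℤ) = (ℓ:ℤ)^(n.factorization ℓ) * ((ordCompl[ℓ] n : ℕ) : ℤ) := by
      exact_mod_cast (Nat.ordProj_mul_ordCompl_eq_self n ℓ).symm
    have hqe : ((R/q : ℕ):ℤ)
        = (ℓ:ℤ)^(e - q.factorization ℓ) * ((ordCompl[ℓ] (R/q) : ℕ) : ℤ) := by
      rw [← hqef]
      exact_mod_cast (Nat.ordProj_mul_ordCompl_eq_self (R/q) ℓ).symm
    have hq'e : ((R/q' : ℕ):ℤ)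
        = (ℓ:ℤ)^(e - q'.factorization ℓ) * ((ordCompl[ℓ] (R/q') : ℕ) : ℤ) := by
      rw [← hq'ef]
      exact_mod_cast (Nat.ordProj_mul_ordCompl_eq_self (R/q') ℓ).symm
    obtain ⟨γ₁, b₁, G₁⟩ := local_good hlp he
      (natdvd_int (Nat.not_dvd_ordCompl hlp hppos.ne'))
      (natdvd_int (Nat.not_dvd_ordCompl hlp hp'pos.ne'))
      (natdvd_int (Nat.not_dvd_ordCompl hlp hcqpos.ne'))
      (natdvd_int (Nat.not_dvd_ordCompl hlp hcq'pos.ne'))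
      (natdvd_int (Nat.not_dvd_ordCompl hlp hn.ne'))
      hfAB hfmin1 hfmin2 hfle hfA hfA' hfB hfB'
    rw [← hpe, ← hpe', ← hqe, ← hq'e, ← hne] at G₁
    have hcopz : IsCoprime ((ℓ:ℤ)^e) ((r₂:ℕ):ℤ) := by
      have h8 := Nat.isCoprime_iff_coprime.mpr hcop
      push_cast at h8 ⊢
      exact h8
    obtain ⟨γ, b, G⟩ := good_crt hcopz G₁ G₂
    refine ⟨γ, b, ?_⟩
    have h9 : ((ℓ:ℤ)^e * ((r₂:ℕ):ℤ)) = ((r' : ℕ) : ℤ) := by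
      exact_mod_cast congrArg (Nat.cast : ℕ → ℤ) hsplit
    rw [← h9]
    exact G

lemma exists_good_total (R p p' q q' n : ℕ) (hR : 0 < R) (hn : 0 < n)
    (hp : p ∣ R) (hp' : p' ∣ R) (hq : q ∣ R) (hq' : q' ∣ R)
    (hprod : p * q = p' * q') (hdvd : p * q ∣ R * n)
    (h1 : Nat.gcd p n = Nat.gcd p' n) (h2 : Nat.gcd q n = Nat.gcd q' n) :
    ∃ γ b : ℤ, Good (R:ℤ) (p:ℤ) (p':ℤ) ((R/q : ℕ):ℤ) ((R/q' : ℕ):ℤ) (n:ℤ) γ b :=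
  exists_good_aux R p p' q q' n hR hn hp hp' hq hq' hprod hdvd h1 h2 R dvd_rfl
    (by rw [Nat.div_self hR]; exact Nat.coprime_one_right _)

lemma dvd_to_eq {r : ℕ} {X Y : ℤ} (h : (r:ℤ) ∣ X - Y) : ((X:ℤ) : ZMod r) = ((Y:ℤ) : ZMod r) := by
  have h2 := (ZMod.intCast_zmod_eq_zero_iff_dvd (X - Y) r).mpr h
  push_cast at h2
  exact sub_eq_zero.mp h2

lemma eq_to_dvd {r : ℕ} {X Y : ℤ} (h : ((X:ℤ) : ZMod r) = ((Y:ℤ) : ZMod r)) : (r:ℤ) ∣ X - Y := by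
  apply (ZMod.intCast_zmod_eq_zero_iff_dvd (X - Y) r).mp
  push_cast
  exact sub_eq_zero.mpr h

lemma good_hinv {r p p' cq cq' n : ℕ} {γ b : ℤ}
    (G : Good (r:ℤ) (p:ℤ) (p':ℤ) (cq:ℤ) (cq':ℤ) (n:ℤ) γ b) :
    ∃ Δ' : ZMod r, ((γ : ℤ) : ZMod r) * Δ' = 1 := by
  obtain ⟨δ, hδ⟩ := G.inv
  refine ⟨(δ : ZMod r), ?_⟩
  have h2 := dvd_to_eq hδ
  push_cast at h2
  exact h2

lemma good_hw1 {r p p' cq cq' n : ℕ} {γ b : ℤ}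
    (G : Good (r:ℤ) (p:ℤ) (p':ℤ) (cq:ℤ) (cq':ℤ) (n:ℤ) γ b) :
    ∀ m : ZMod r, (p : ZMod r) * m = 0 →
      ∃ z : ZMod r, ((b:ℤ) : ZMod r) * m = (cq' : ZMod r) * z := by
  intro m hm
  obtain ⟨mi, rfl⟩ := ZMod.intCast_surjective m
  have hm2 : (((p : ℤ) * mi : ℤ) : ZMod r) = 0 := by push_cast; push_cast at hm; exact hm
  obtain ⟨z, hz⟩ := G.w1 mi ((ZMod.intCast_zmod_eq_zero_iff_dvd _ r).mp hm2)
  refine ⟨(z : ZMod r), ?_⟩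
  have h2 := dvd_to_eq hz
  push_cast at h2
  exact h2

lemma good_hw2 {r p p' cq cq' n : ℕ} {γ b : ℤ}
    (G : Good (r:ℤ) (p:ℤ) (p':ℤ) (cq:ℤ) (cq':ℤ) (n:ℤ) γ b) :
    ∃ z : ZMod r, ((γ:ℤ) : ZMod r) * (p : ZMod r) + ((b:ℤ) : ZMod r) * (n : ZMod r)
      = ((p' : ℕ) : ZMod r) * z := by
  obtain ⟨z, hz⟩ := G.w2
  refine ⟨(z : ZMod r), ?_⟩
  have h2 := dvd_to_eq hz
  push_cast at h2
  exact h2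

lemma good_hw3 {r p p' cq cq' n : ℕ} {γ b : ℤ}
    (G : Good (r:ℤ) (p:ℤ) (p':ℤ) (cq:ℤ) (cq':ℤ) (n:ℤ) γ b) :
    ∀ κ m : ZMod r, (p : ZMod r) * m = (cq : ZMod r) * ((n : ZMod r) * κ) →
      ∃ z, ((γ:ℤ) : ZMod r) * ((cq : ZMod r) * κ) + ((b:ℤ) : ZMod r) * m
        = (cq' : ZMod r) * z := by
  intro κ m hκm
  obtain ⟨κi, rfl⟩ := ZMod.intCast_surjective κ
  obtain ⟨mi, rfl⟩ := ZMod.intCast_surjective m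
  have hm2 : (r:ℤ) ∣ (p:ℤ) * mi - (cq:ℤ) * (n:ℤ) * κi := by
    rw [show (p:ℤ) * mi - (cq:ℤ) * (n:ℤ) * κi
      = (p:ℤ) * mi - ((cq:ℤ) * ((n:ℤ) * κi)) by ring]
    apply eq_to_dvd
    push_cast
    push_cast at hκm
    exact hκm
  obtain ⟨z, hz⟩ := G.w3 κi mi hm2
  refine ⟨(z : ZMod r), ?_⟩
  have h2 := dvd_to_eq hz
  push_cast at h2
  linear_combination h2

lemma good_hk {r p p' cq cq' n : ℕ} {γ b : ℤ}
    (G : Good (r:ℤ) (p:ℤ) (p':ℤ) (cq:ℤ) (cq':ℤ) (n:ℤ) γ b) :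
    ∀ s m : ZMod r, (p : ZMod r) * m = (n : ZMod r) * s →
      (∃ z, ((γ:ℤ) : ZMod r) * s + ((b:ℤ) : ZMod r) * m = (cq' : ZMod r) * z) →
      ∃ z, s = (cq : ZMod r) * z := by
  intro s m hsm hex
  obtain ⟨si, rfl⟩ := ZMod.intCast_surjective s
  obtain ⟨mi, rfl⟩ := ZMod.intCast_surjective m
  obtain ⟨z, hz⟩ := hex
  obtain ⟨zi, rfl⟩ := ZMod.intCast_surjective z
  have hm2 : (r:ℤ) ∣ (p:ℤ) * mi - (n:ℤ) * si := by
    apply eq_to_dvd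
    push_cast
    push_cast at hsm
    exact hsm
  have hz2 : ∃ zz : ℤ, (r:ℤ) ∣ γ * si + b * mi - (cq':ℤ) * zz := by
    refine ⟨zi, ?_⟩
    apply eq_to_dvd
    push_cast
    push_cast at hz
    linear_combination hz
  obtain ⟨w, hw⟩ := G.k si mi hm2 hz2
  refine ⟨(w : ZMod r), ?_⟩
  have h2 := dvd_to_eq hw
  push_cast at h2
  exact h2

end ProofNT


namespace ProofGRP

lemma GG_finite (r n : ℕ) [NeZero r] : Finite (GG r n) :=
  Finite.of_injective (fun g : GG r n => (g.left, g.right)) (by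
    intro a b h
    simp only [Prod.mk.injEq] at h
    exact SemidirectProduct.ext h.1 h.2)

end ProofGRP

namespace ProofGRP

variable {r n : ℕ}

lemma permAct_apply (π : Equiv.Perm (Fin n)) (x : Multiplicative (Fin n → ZMod r)) (i : Fin n) :
    toAdd ((permAct r n π) x) i = toAdd x (π⁻¹ i) := rfl

lemma DeltaHom_eval (g : GG r n) :
    toAdd (DeltaHom r n g) = ∑ i, toAdd g.left i := by
  conv_lhs => rw [← SemidirectProduct.inl_left_mul_inr_right g]
  rw [map_mul]
  have h1 : DeltaHom r n (SemidirectProduct.inl g.left) = sumHom r n g.left := by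
    simp [DeltaHom]
  have h2 : DeltaHom r n (SemidirectProduct.inr g.right) = 1 := by
    simp [DeltaHom]
  rw [h1, h2, mul_one]
  rfl

lemma mem_Grpn_iff (p : ℕ) (g : GG r n) :
    g ∈ Grpn r p n ↔ ∃ z : ZMod r, (p : ZMod r) * z = ∑ i, toAdd g.left i := by
  constructor
  · intro h
    obtain ⟨k, hk⟩ := h
    refine ⟨((k : ℤ) : ZMod r), ?_⟩
    have hk' : (k : ℤ) • ((p:ℕ) : ZMod r) = toAdd (DeltaHom r n g) := congrArg toAdd hk
    rw [← DeltaHom_eval]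
    rw [zsmul_eq_mul] at hk'
    rw [← hk']
    push_cast
    ring
  · rintro ⟨z, hz⟩
    obtain ⟨k, rfl⟩ := ZMod.intCast_surjective z
    refine ⟨k, ?_⟩
    have : (k:ℤ) • ((p:ℕ) : ZMod r) = toAdd (DeltaHom r n g) := by
      rw [DeltaHom_eval, ← hz, zsmul_eq_mul]
      push_cast
      ring
    exact congrArg Multiplicative.ofAdd this


lemma inl_const_central (t : ZMod r) :
    (inl (ofAdd fun _ => t) : GG r n) ∈ Subgroup.center (GG r n) := by
  rw [Subgroup.mem_center_iff]
  intro g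
  have h1 : (permAct r n g.right) (ofAdd fun _ => (t : ZMod r)) = ofAdd fun _ => t := rfl
  refine SemidirectProduct.ext ?_ ?_
  · simp [mul_left, h1, mul_comm]
  · simp [mul_right]

lemma cEl_pow_zpow (m : ℕ) (j : ℤ) :
    ((cEl r n ^ m) ^ j : GG r n)
      = inl (ofAdd fun _ => ((m : ZMod r) * ((j:ℤ) : ZMod r))) := by
  rw [cEl, ← map_pow, ← map_zpow]
  congr 1
  have h : toAdd (((ofAdd fun _ : Fin n => (1 : ZMod r)) ^ m) ^ j)
      = fun _ : Fin n => ((m : ZMod r) * ((j:ℤ) : ZMod r)) := by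
    funext i
    rw [toAdd_zpow, toAdd_pow]
    simp only [Pi.smul_apply, toAdd_ofAdd]
    rw [nsmul_eq_mul, zsmul_eq_mul]
    push_cast
    ring
  rw [← ofAdd_toAdd ((((ofAdd fun _ : Fin n => (1 : ZMod r)) ^ m) ^ j)), h]

lemma mem_CsubQ_iff (q : ℕ) (g : GG r n) :
    g ∈ CsubQ r q n ↔
      ∃ j : ℤ, g = inl (ofAdd fun _ => (((r/q : ℕ) : ZMod r) * ((j:ℤ) : ZMod r))) := by
  rw [CsubQ, Subgroup.mem_zpowers_iff]
  constructor
  · rintro ⟨j, rfl⟩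
    exact ⟨j, cEl_pow_zpow _ _⟩
  · rintro ⟨j, rfl⟩
    exact ⟨j, cEl_pow_zpow _ _⟩

lemma mem_CsubIn_iff (p q : ℕ) (x : ↥(Grpn r p n)) :
    x ∈ CsubIn r p q n ↔ (x : GG r n) ∈ CsubQ r q n := Iff.rfl

lemma intCast_val [NeZero r] (z : ZMod r) : ((z.val : ℤ) : ZMod r) = z := by
  push_cast
  exact ZMod.natCast_rightInverse z

section Half

variable (p p' q q' : ℕ) (Γ Β : ZMod r)

noncomputable def mOf (g : ↥(Grpn r p n)) : ZMod r :=
  ((mem_Grpn_iff p (g : GG r n)).mp g.2).choose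

lemma mOf_spec (g : ↥(Grpn r p n)) :
    (p : ZMod r) * mOf p g = ∑ i, toAdd (g : GG r n).left i :=
  ((mem_Grpn_iff p (g : GG r n)).mp g.2).choose_spec

noncomputable def twc (g : ↥(Grpn r p n)) : GG r n :=
  ⟨ofAdd fun i => Γ * toAdd (g : GG r n).left i + Β * mOf p g, (g : GG r n).right⟩

lemma twc_left (g : ↥(Grpn r p n)) (i : Fin n) :
    toAdd (twc p Γ Β g).left i = Γ * toAdd (g : GG r n).left i + Β * mOf p g := rfl

lemma twc_right (g : ↥(Grpn r p n)) : (twc p Γ Β g).right = (g : GG r n).right := rfl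

lemma twc_sum (g : ↥(Grpn r p n)) :
    ∑ i, toAdd (twc p Γ Β g).left i
      = Γ * ((p : ZMod r) * mOf p g) + (n : ZMod r) * (Β * mOf p g) := by
  show (∑ i : Fin n, (Γ * toAdd (g : GG r n).left i + Β * mOf p g)) = _
  rw [Finset.sum_add_distrib, ← Finset.mul_sum, mOf_spec, Finset.sum_const,
    Finset.card_univ, Fintype.card_fin, nsmul_eq_mul]

variable (hw2 : ∃ z : ZMod r, Γ * (p : ZMod r) + Β * (n : ZMod r) = ((p' : ℕ) : ZMod r) * z)

include hw2 in
lemma twc_mem (g : ↥(Grpn r p n)) : twc p Γ Β g ∈ Grpn r p' n := by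
  rw [mem_Grpn_iff]
  obtain ⟨z, hz⟩ := hw2
  refine ⟨z * mOf p g, ?_⟩
  rw [twc_sum]
  linear_combination (-(mOf p g)) * hz

noncomputable def Fmap : ↥(Grpn r p n) → Gpq r p' q' n :=
  fun g => Gmk r p' q' n ⟨twc p Γ Β g, twc_mem p p' Γ Β hw2 g⟩

lemma quot_eq [NeZero r] (h₁ h₂ : ↥(Grpn r p' n)) (z : ZMod r)
    (hz : (h₂ : GG r n) = inl (ofAdd fun _ => ((r/q' : ℕ) : ZMod r) * z) * (h₁ : GG r n)) :
    Gmk r p' q' n h₁ = Gmk r p' q' n h₂ := by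
  have hcen := Subgroup.mem_center_iff.mp
    (inl_const_central (r := r) (n := n) (((r/q' : ℕ) : ZMod r) * z))
  have hc1 : ((h₁⁻¹ * h₂ : ↥(Grpn r p' n)) : GG r n)
      = inl (ofAdd fun _ => ((r/q' : ℕ) : ZMod r) * z) := by
    push_cast
    rw [hz, ← hcen ((h₁ : GG r n))]
    group
  rw [Gmk, QuotientGroup.mk'_eq_mk']
  refine ⟨h₁⁻¹ * h₂, ?_, by group⟩
  rw [mem_CsubIn_iff, hc1, mem_CsubQ_iff]
  refine ⟨(z.val : ℤ), ?_⟩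
  rw [intCast_val]

include hw2 in
lemma Fmap_mul [NeZero r]
    (hw1 : ∀ m : ZMod r, (p : ZMod r) * m = 0 →
      ∃ z : ZMod r, Β * m = ((r/q' : ℕ) : ZMod r) * z)
    (g h : ↥(Grpn r p n)) :
    Fmap p p' q' Γ Β hw2 (g * h) = Fmap p p' q' Γ Β hw2 g * Fmap p p' q' Γ Β hw2 h := by
  have hSig : ∑ i, toAdd ((g * h : ↥(Grpn r p n)) : GG r n).left i
      = (∑ i, toAdd (g : GG r n).left i) + ∑ i, toAdd (h : GG r n).left i := by
    have hco : ((g * h : ↥(Grpn r p n)) : GG r n) = (g : GG r n) * (h : GG r n) := rfl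
    rw [hco, SemidirectProduct.mul_left]
    simp only [toAdd_mul, Pi.add_apply, permAct_apply]
    rw [Finset.sum_add_distrib]
    congr 1
    exact Equiv.sum_comp ((g : GG r n).right)⁻¹ _
  have hm0 : (p : ZMod r) * (mOf p (g * h) - mOf p g - mOf p h) = 0 := by
    have h1 := mOf_spec (r := r) (n := n) p (g * h)
    have h2 := mOf_spec (r := r) (n := n) p g
    have h3 := mOf_spec (r := r) (n := n) p h
    rw [hSig] at h1
    linear_combination h1 - h2 - h3
  obtain ⟨z, hz⟩ := hw1 _ hm0
  have hgh : ∀ i, toAdd ((g * h : ↥(Grpn r p n)) : GG r n).left i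
      = toAdd (g : GG r n).left i
        + toAdd (h : GG r n).left (((g : GG r n).right)⁻¹ i) := by
    intro i
    have hco : ((g * h : ↥(Grpn r p n)) : GG r n) = (g : GG r n) * (h : GG r n) := rfl
    rw [hco, SemidirectProduct.mul_left]
    simp only [toAdd_mul, Pi.add_apply, permAct_apply]
  set C : GG r n := inl (ofAdd fun _ => ((r/q' : ℕ) : ZMod r) * z) with hC
  have key : twc p Γ Β (g * h) = C * (twc p Γ Β g * twc p Γ Β h) := by
    refine SemidirectProduct.ext ?_ ?_
    · have hfun : (fun i => toAdd (twc p Γ Β (g*h)).left i)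
          = fun i => toAdd (C * (twc p Γ Β g * twc p Γ Β h)).left i := by
        funext i
        have rhs : toAdd (C * (twc p Γ Β g * twc p Γ Β h)).left i
            = ((r/q' : ℕ) : ZMod r) * z
              + ((Γ * toAdd (g : GG r n).left i + Β * mOf p g)
                + (Γ * toAdd (h : GG r n).left (((g : GG r n).right)⁻¹ i) + Β * mOf p h)) := by
          rw [hC]
          simp only [SemidirectProduct.mul_left, SemidirectProduct.left_inl,
            SemidirectProduct.right_inl, map_one, MulAut.one_apply, toAdd_mul, Pi.add_apply,
            toAdd_ofAdd, permAct_apply]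
          simp only [twc_left, twc_right]
        rw [rhs, twc_left, hgh i]
        linear_combination hz
      calc (twc p Γ Β (g*h)).left
          = ofAdd (toAdd ((twc p Γ Β (g*h)).left)) := (ofAdd_toAdd _).symm
        _ = ofAdd (toAdd ((C * (twc p Γ Β g * twc p Γ Β h)).left)) := congrArg _ hfun
        _ = (C * (twc p Γ Β g * twc p Γ Β h)).left := ofAdd_toAdd _
    · show ((g * h : ↥(Grpn r p n)) : GG r n).right = (C * (twc p Γ Β g * twc p Γ Β h)).right
      have hco : ((g * h : ↥(Grpn r p n)) : GG r n) = (g : GG r n) * (h : GG r n) := rfl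
      rw [hco, hC]
      simp only [SemidirectProduct.mul_right, SemidirectProduct.right_inl, twc_right, one_mul]
  calc Fmap p p' q' Γ Β hw2 (g * h)
      = Gmk r p' q' n ⟨twc p Γ Β (g*h), twc_mem p p' Γ Β hw2 (g*h)⟩ := rfl
    _ = Gmk r p' q' n (⟨twc p Γ Β g, twc_mem p p' Γ Β hw2 g⟩
          * ⟨twc p Γ Β h, twc_mem p p' Γ Β hw2 h⟩) :=
        (quot_eq p' q'
          (⟨twc p Γ Β g, twc_mem p p' Γ Β hw2 g⟩ * ⟨twc p Γ Β h, twc_mem p p' Γ Β hw2 h⟩)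
          ⟨twc p Γ Β (g*h), twc_mem p p' Γ Β hw2 (g*h)⟩ z key).symm
    _ = Fmap p p' q' Γ Β hw2 g * Fmap p p' q' Γ Β hw2 h := by
        rw [Gmk, map_mul]
        rfl

noncomputable def Fhom [NeZero r]
    (hw1 : ∀ m : ZMod r, (p : ZMod r) * m = 0 →
      ∃ z : ZMod r, Β * m = ((r/q' : ℕ) : ZMod r) * z) :
    ↥(Grpn r p n) →* Gpq r p' q' n :=
  MonoidHom.mk' (Fmap p p' q' Γ Β hw2) (Fmap_mul p p' q' Γ Β hw2 hw1)

include hw2 in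
lemma Fhom_ker_le [NeZero r]
    (hw1 : ∀ m : ZMod r, (p : ZMod r) * m = 0 →
      ∃ z : ZMod r, Β * m = ((r/q' : ℕ) : ZMod r) * z)
    (hw3 : ∀ κ m : ZMod r, (p : ZMod r) * m = ((r/q : ℕ) : ZMod r) * ((n : ZMod r) * κ) →
      ∃ z, Γ * (((r/q : ℕ) : ZMod r) * κ) + Β * m = ((r/q' : ℕ) : ZMod r) * z)
    (x : ↥(Grpn r p n)) (hx : x ∈ CsubIn r p q n) :
    Fhom p p' q' Γ Β hw2 hw1 x = 1 := by
  obtain ⟨j, hj⟩ := (mem_CsubQ_iff q (x : GG r n)).mp hx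
  have hleft : ∀ i, toAdd (x : GG r n).left i = ((r/q : ℕ) : ZMod r) * ((j:ℤ) : ZMod r) := by
    intro i
    rw [hj]
    rfl
  have hright : (x : GG r n).right = 1 := by rw [hj]; rfl
  have hpm : (p : ZMod r) * mOf p x
      = ((r/q:ℕ):ZMod r) * ((n:ZMod r) * ((j:ℤ):ZMod r)) := by
    rw [mOf_spec]
    have h5 : ∑ i, toAdd (x : GG r n).left i
        = ∑ _i : Fin n, ((r/q:ℕ):ZMod r) * ((j:ℤ):ZMod r) :=
      Finset.sum_congr rfl fun i _ => hleft i
    rw [h5, Finset.sum_const, Finset.card_univ, Fintype.card_fin, nsmul_eq_mul]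
    ring
  obtain ⟨z, hz⟩ := hw3 ((j:ℤ):ZMod r) (mOf p x) hpm
  have hkey : twc p Γ Β x = inl (ofAdd fun _ : Fin n => ((r/q':ℕ):ZMod r) * z) := by
    refine SemidirectProduct.ext ?_ ?_
    · have hfun : (fun i => toAdd (twc p Γ Β x).left i)
          = fun _ : Fin n => ((r/q':ℕ):ZMod r) * z := by
        funext i
        rw [twc_left, hleft i]
        linear_combination hz
      calc (twc p Γ Β x).left = ofAdd (toAdd (twc p Γ Β x).left) := (ofAdd_toAdd _).symm
        _ = ofAdd (fun _ : Fin n => ((r/q':ℕ):ZMod r) * z) := congrArg _ hfun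
        _ = (inl (ofAdd fun _ : Fin n => ((r/q':ℕ):ZMod r) * z) : GG r n).left := rfl
    · show (x : GG r n).right = _
      rw [hright]
      rfl
  have hmem : (⟨twc p Γ Β x, twc_mem p p' Γ Β hw2 x⟩ : ↥(Grpn r p' n))
      ∈ CsubIn r p' q' n := by
    rw [mem_CsubIn_iff]
    show twc p Γ Β x ∈ CsubQ r q' n
    rw [mem_CsubQ_iff]
    exact ⟨(z.val : ℤ), by rw [intCast_val]; exact hkey⟩
  show Gmk r p' q' n ⟨twc p Γ Β x, twc_mem p p' Γ Β hw2 x⟩ = 1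
  rw [Gmk, QuotientGroup.mk'_apply, QuotientGroup.eq_one_iff]
  exact hmem

include hw2 in
lemma Fhom_ker_ge [NeZero r]
    (hw1 : ∀ m : ZMod r, (p : ZMod r) * m = 0 →
      ∃ z : ZMod r, Β * m = ((r/q' : ℕ) : ZMod r) * z)
    (hinv : ∃ Δ' : ZMod r, Γ * Δ' = 1)
    (hk : ∀ s m : ZMod r, (p : ZMod r) * m = (n : ZMod r) * s →
      (∃ z, Γ * s + Β * m = ((r/q' : ℕ) : ZMod r) * z) →
      ∃ z, s = ((r/q : ℕ) : ZMod r) * z)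
    (x : ↥(Grpn r p n)) (hx : Fhom p p' q' Γ Β hw2 hw1 x = 1) :
    x ∈ CsubIn r p q n := by
  have hmem : twc p Γ Β x ∈ CsubQ r q' n := by
    have h1 : Gmk r p' q' n ⟨twc p Γ Β x, twc_mem p p' Γ Β hw2 x⟩ = 1 := hx
    rw [Gmk, QuotientGroup.mk'_apply, QuotientGroup.eq_one_iff] at h1
    exact (mem_CsubIn_iff p' q' _).mp h1
  obtain ⟨j, hj⟩ := (mem_CsubQ_iff q' _).mp hmem
  obtain ⟨Δ', hΔ'⟩ := hinv
  have hleft : ∀ i, toAdd (twc p Γ Β x).left i = ((r/q':ℕ):ZMod r) * ((j:ℤ):ZMod r) := by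
    intro i
    rw [hj]
    rfl
  have hright : (x : GG r n).right = 1 := by
    have h2 : (twc p Γ Β x).right = 1 := by rw [hj]; rfl
    rwa [twc_right] at h2
  have hxi : ∀ i, toAdd (x : GG r n).left i
      = Δ' * (((r/q':ℕ):ZMod r) * ((j:ℤ):ZMod r) - Β * mOf p x) := by
    intro i
    have h2 := hleft i
    rw [twc_left] at h2
    have h3 : Γ * toAdd (x : GG r n).left i
        = ((r/q':ℕ):ZMod r) * ((j:ℤ):ZMod r) - Β * mOf p x := by linear_combination h2
    linear_combination Δ' * h3 + (- toAdd (x : GG r n).left i) * hΔ'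
  have hsum : (p:ZMod r) * mOf p x
      = (n:ZMod r) * (Δ' * (((r/q':ℕ):ZMod r) * ((j:ℤ):ZMod r) - Β * mOf p x)) := by
    rw [mOf_spec]
    have h5 : ∑ i, toAdd (x : GG r n).left i
        = ∑ _i : Fin n, Δ' * (((r/q':ℕ):ZMod r) * ((j:ℤ):ZMod r) - Β * mOf p x) :=
      Finset.sum_congr rfl fun i _ => hxi i
    rw [h5, Finset.sum_const, Finset.card_univ, Fintype.card_fin, nsmul_eq_mul]
  have hsk : ∃ z, Γ * (Δ' * (((r/q':ℕ):ZMod r) * ((j:ℤ):ZMod r) - Β * mOf p x))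
      + Β * mOf p x = ((r/q':ℕ):ZMod r) * z := by
    refine ⟨((j:ℤ):ZMod r), ?_⟩
    linear_combination ((((r/q':ℕ):ZMod r) * ((j:ℤ):ZMod r) - Β * mOf p x)) * hΔ'
  obtain ⟨z, hzz⟩ := hk _ (mOf p x) hsum hsk
  rw [mem_CsubIn_iff, mem_CsubQ_iff]
  refine ⟨(z.val : ℤ), ?_⟩
  refine SemidirectProduct.ext ?_ ?_
  · have hfun : (fun i => toAdd (x : GG r n).left i)
        = fun _ : Fin n => ((r/q:ℕ):ZMod r) * ((z.val:ℤ):ZMod r) := by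
      funext i
      rw [hxi i, hzz, intCast_val]
    calc (x:GG r n).left = ofAdd (toAdd (x:GG r n).left) := (ofAdd_toAdd _).symm
      _ = ofAdd (fun _ : Fin n => ((r/q:ℕ):ZMod r) * ((z.val:ℤ):ZMod r)) := congrArg _ hfun
      _ = (inl (ofAdd fun _ : Fin n => ((r/q:ℕ):ZMod r) * ((z.val:ℤ):ZMod r)) : GG r n).left
          := rfl
  · rw [hright]
    rfl

end Half

lemma half_iso [NeZero r] (p p' q q' : ℕ) (Γ Β : ZMod r)
    (hinv : ∃ Δ' : ZMod r, Γ * Δ' = 1)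
    (hw1 : ∀ m : ZMod r, (p : ZMod r) * m = 0 →
      ∃ z : ZMod r, Β * m = ((r/q' : ℕ) : ZMod r) * z)
    (hw2 : ∃ z : ZMod r, Γ * (p : ZMod r) + Β * (n : ZMod r) = ((p' : ℕ) : ZMod r) * z)
    (hw3 : ∀ κ m : ZMod r, (p : ZMod r) * m = ((r/q : ℕ) : ZMod r) * ((n : ZMod r) * κ) →
      ∃ z, Γ * (((r/q : ℕ) : ZMod r) * κ) + Β * m = ((r/q' : ℕ) : ZMod r) * z)
    (hk : ∀ s m : ZMod r, (p : ZMod r) * m = (n : ZMod r) * s →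
      (∃ z, Γ * s + Β * m = ((r/q' : ℕ) : ZMod r) * z) →
      ∃ z, s = ((r/q : ℕ) : ZMod r) * z) :
    ∃ f : Gpq r p q n →* Gpq r p' q' n, Function.Injective f := by
  refine ⟨QuotientGroup.lift (CsubIn r p q n) (Fhom p p' q' Γ Β hw2 hw1) ?_, ?_⟩
  · intro x hx
    rw [MonoidHom.mem_ker]
    exact Fhom_ker_le p p' q q' Γ Β hw2 hw1 hw3 x hx
  · rw [injective_iff_map_eq_one]
    intro a ha
    obtain ⟨g, rfl⟩ := QuotientGroup.mk'_surjective (CsubIn r p q n) a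
    rw [QuotientGroup.mk'_apply, QuotientGroup.lift_mk] at ha
    rw [QuotientGroup.mk'_apply, QuotientGroup.eq_one_iff]
    exact Fhom_ker_ge p p' q q' Γ Β hw2 hw1 hinv hk g ha

end ProofGRP

/-- If `gcd(p,n) = gcd(p',n)` and `gcd(q,n) = gcd(q',n)` (with
`pq = p'q'`), then `G(r,p,q,n)` and `G(r,p',q',n)` are isomorphic. -/
theorem Gpq_iso_of_gcd_eq
    (r n p p' q q' : ℕ) (hr : 0 < r) (hn : 0 < n)
    (hp : p ∣ r) (hp' : p' ∣ r) (hq : q ∣ r) (hq' : q' ∣ r)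
    (hprod : p * q = p' * q') (hdvd : p * q ∣ r * n)
    (h1 : Nat.gcd p n = Nat.gcd p' n) (h2 : Nat.gcd q n = Nat.gcd q' n) :
    Nonempty (Gpq r p q n ≃* Gpq r p' q' n) := by
  haveI : NeZero r := ⟨hr.ne'⟩
  obtain ⟨γ₁, b₁, G₁⟩ := ProofNT.exists_good_total r p p' q q' n hr hn hp hp' hq hq'
    hprod hdvd h1 h2
  obtain ⟨γ₂, b₂, G₂⟩ := ProofNT.exists_good_total r p' p q' q n hr hn hp' hp hq' hq
    hprod.symm (by rw [← hprod]; exact hdvd) h1.symm h2.symm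
  obtain ⟨f, hf⟩ := ProofGRP.half_iso (r := r) (n := n) p p' q q'
    ((γ₁:ℤ) : ZMod r) ((b₁:ℤ) : ZMod r)
    (ProofNT.good_hinv G₁) (ProofNT.good_hw1 G₁) (ProofNT.good_hw2 G₁)
    (ProofNT.good_hw3 G₁) (ProofNT.good_hk G₁)
  obtain ⟨f', hf'⟩ := ProofGRP.half_iso (r := r) (n := n) p' p q' q
    ((γ₂:ℤ) : ZMod r) ((b₂:ℤ) : ZMod r)
    (ProofNT.good_hinv G₂) (ProofNT.good_hw1 G₂) (ProofNT.good_hw2 G₂)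
    (ProofNT.good_hw3 G₂) (ProofNT.good_hk G₂)
  haveI : Finite (GG r n) := ProofGRP.GG_finite r n
  haveI : Finite (Gpq r p q n) :=
    Finite.of_surjective _ (QuotientGroup.mk'_surjective (CsubIn r p q n))
  haveI : Finite (Gpq r p' q' n) :=
    Finite.of_surjective _ (QuotientGroup.mk'_surjective (CsubIn r p' q' n))
  have hcard : Nat.card (Gpq r p q n) = Nat.card (Gpq r p' q' n) :=
    le_antisymm (Nat.card_le_card_of_injective f hf) (Nat.card_le_card_of_injective f' hf')
  exact ⟨MulEquiv.ofBijective f ((Nat.bijective_iff_injective_and_card f).mpr ⟨hf, hcard⟩)⟩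
end

section
/- Let r, n be positive integers and let p, p', q, q' be positive divisors of r with pq = p'q' dividing rn, and assume gcd(p,n) = gcd(p',n) and gcd(q,n) = gcd(q',n). Call a prime special if it appears with different multiplicities in the prime factorizations of p and p'. Write rn/(pq) = η·δ, where δ is the largest divisor of rn/(pq) all of whose prime factors are special and η = (rn/(pq))/δ. Then δp divides r and δpq divides rn (so that G(r,δp,q,n) is well-defined), and G(r,p,q,n) ≅ G(r,δp,q,n) × (ℤ/δℤ). -/
open SemidirectProduct Multiplicative


lemma fact_prod_pow_apply (s : Finset ℕ) (hs : ∀ π ∈ s, π.Prime) (e : ℕ → ℕ) (ℓ : ℕ) :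
    (∏ π ∈ s, π ^ e π).factorization ℓ = if ℓ ∈ s then e ℓ else 0 := by
  rw [Nat.factorization_prod (fun π hπ => pow_ne_zero _ (hs π hπ).pos.ne')]
  rw [Finsupp.finset_sum_apply]
  rw [Finset.sum_congr rfl (fun π hπ => by
    rw [(hs π hπ).factorization_pow, Finsupp.single_apply])]
  exact Finset.sum_ite_eq' s ℓ e

lemma arith (r n p p' q q' : ℕ) (hr : 0 < r) (hn : 0 < n)
    (hp : p ∣ r) (hp' : p' ∣ r) (hq : q ∣ r) (hq' : q' ∣ r)
    (hprod : p * q = p' * q') (hdvd : p * q ∣ r * n)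
    (h1 : Nat.gcd p n = Nat.gcd p' n) (h2 : Nat.gcd q n = Nat.gcd q' n)
    (δ : ℕ)
    (hδ : δ = ∏ π ∈ (r * n / (p * q)).primeFactors,
        if π.Prime ∧ p.factorization π ≠ p'.factorization π
        then π ^ (r * n / (p * q)).factorization π else 1) :
    0 < δ ∧ ∃ m : ℕ, 0 < m ∧ δ * p ∣ r ∧ δ * p * q ∣ r * n ∧
      Nat.gcd (n * m) (δ * p) = p ∧ (r / q) ∣ m * δ := by
  have hr0 : r ≠ 0 := hr.ne'
  have hn0 : n ≠ 0 := hn.ne'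
  have hp0 : p ≠ 0 := by rintro rfl; exact hr0 (zero_dvd_iff.mp hp)
  have hp'0 : p' ≠ 0 := by rintro rfl; exact hr0 (zero_dvd_iff.mp hp')
  have hq0 : q ≠ 0 := by rintro rfl; exact hr0 (zero_dvd_iff.mp hq)
  have hq'0 : q' ≠ 0 := by rintro rfl; exact hr0 (zero_dvd_iff.mp hq')
  have hrn0 : r * n ≠ 0 := mul_ne_zero hr0 hn0
  have hpq0 : p * q ≠ 0 := mul_ne_zero hp0 hq0
  have hδ' : δ = ∏ π ∈ (r * n / (p * q)).primeFactors,
      π ^ (if p.factorization π ≠ p'.factorization π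
           then (r * n / (p * q)).factorization π else 0) := by
    rw [hδ]
    refine Finset.prod_congr rfl fun π hπ => ?_
    have hπp := Nat.prime_of_mem_primeFactors hπ
    by_cases h : p.factorization π ≠ p'.factorization π <;> simp [h, hπp]
  have hδ0 : δ ≠ 0 := by
    rw [hδ']
    exact (Finset.prod_pos fun π hπ =>
      pow_pos (Nat.prime_of_mem_primeFactors hπ).pos _).ne'
  set m := ∏ π ∈ r.primeFactors,
      π ^ (if p.factorization π ≠ p'.factorization π
           then p.factorization π - n.factorization π
           else r.factorization π - q.factorization π) with hm
  have hm0 : m ≠ 0 := by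
    rw [hm]
    exact (Finset.prod_pos fun π hπ =>
      pow_pos (Nat.prime_of_mem_primeFactors hπ).pos _).ne'
  -- pointwise descriptions
  have hvδ : ∀ ℓ : ℕ, ℓ.Prime →
      δ.factorization ℓ = if p.factorization ℓ ≠ p'.factorization ℓ
        then (r * n).factorization ℓ - (p * q).factorization ℓ else 0 := by
    intro ℓ hℓ
    rw [hδ', fact_prod_pow_apply _ (fun π hπ => Nat.prime_of_mem_primeFactors hπ)]
    have hdiv : (r * n / (p * q)).factorization
        = (r * n).factorization - (p * q).factorization := Nat.factorization_div hdvd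
    by_cases hmem : ℓ ∈ (r * n / (p * q)).primeFactors
    · rw [if_pos hmem, hdiv, Finsupp.tsub_apply]
    · rw [if_neg hmem]
      have h0 : (r * n / (p * q)).factorization ℓ = 0 := by
        rwa [← Finsupp.notMem_support_iff, Nat.support_factorization]
      rw [hdiv, Finsupp.tsub_apply] at h0
      split <;> omega
  have hvm : ∀ ℓ : ℕ, ℓ.Prime →
      m.factorization ℓ = if p.factorization ℓ ≠ p'.factorization ℓ
        then p.factorization ℓ - n.factorization ℓ
        else r.factorization ℓ - q.factorization ℓ := by
    intro ℓ hℓ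
    rw [hm, fact_prod_pow_apply _ (fun π hπ => Nat.prime_of_mem_primeFactors hπ)]
    by_cases hmem : ℓ ∈ r.primeFactors
    · rw [if_pos hmem]
    · rw [if_neg hmem]
      have hR : r.factorization ℓ = 0 := by
        rwa [← Finsupp.notMem_support_iff, Nat.support_factorization]
      have ha : p.factorization ℓ ≤ r.factorization ℓ :=
        Finsupp.le_def.mp ((Nat.factorization_le_iff_dvd hp0 hr0).2 hp) ℓ
      have ha' : p'.factorization ℓ ≤ r.factorization ℓ :=
        Finsupp.le_def.mp ((Nat.factorization_le_iff_dvd hp'0 hr0).2 hp') ℓ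
      split <;> omega
  -- per-prime basic facts
  have facts : ∀ ℓ : ℕ, ℓ.Prime →
      p.factorization ℓ ≤ r.factorization ℓ ∧
      p'.factorization ℓ ≤ r.factorization ℓ ∧
      q.factorization ℓ ≤ r.factorization ℓ ∧
      q'.factorization ℓ ≤ r.factorization ℓ ∧
      p.factorization ℓ + q.factorization ℓ = p'.factorization ℓ + q'.factorization ℓ ∧
      p.factorization ℓ + q.factorization ℓ ≤ r.factorization ℓ + n.factorization ℓ ∧
      min (p.factorization ℓ) (n.factorization ℓ) = min (p'.factorization ℓ) (n.factorization ℓ) ∧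
      min (q.factorization ℓ) (n.factorization ℓ) = min (q'.factorization ℓ) (n.factorization ℓ) := by
    intro ℓ hℓ
    refine ⟨Finsupp.le_def.mp ((Nat.factorization_le_iff_dvd hp0 hr0).2 hp) ℓ,
      Finsupp.le_def.mp ((Nat.factorization_le_iff_dvd hp'0 hr0).2 hp') ℓ,
      Finsupp.le_def.mp ((Nat.factorization_le_iff_dvd hq0 hr0).2 hq) ℓ,
      Finsupp.le_def.mp ((Nat.factorization_le_iff_dvd hq'0 hr0).2 hq') ℓ, ?_, ?_, ?_, ?_⟩
    · have := congrArg Nat.factorization hprod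
      rw [Nat.factorization_mul hp0 hq0, Nat.factorization_mul hp'0 hq'0] at this
      exact DFunLike.congr_fun this ℓ
    · have := Finsupp.le_def.mp ((Nat.factorization_le_iff_dvd hpq0 hrn0).2 hdvd) ℓ
      rwa [Nat.factorization_mul hp0 hq0, Nat.factorization_mul hr0 hn0,
        Finsupp.add_apply, Finsupp.add_apply] at this
    · have := congrArg Nat.factorization h1
      rw [Nat.factorization_gcd hp0 hn0, Nat.factorization_gcd hp'0 hn0] at this
      have := DFunLike.congr_fun this ℓ
      rwa [Finsupp.inf_apply, Finsupp.inf_apply] at this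
    · have := congrArg Nat.factorization h2
      rw [Nat.factorization_gcd hq0 hn0, Nat.factorization_gcd hq'0 hn0] at this
      have := DFunLike.congr_fun this ℓ
      rwa [Finsupp.inf_apply, Finsupp.inf_apply] at this
  have hvpq : ∀ ℓ : ℕ, (p * q).factorization ℓ = p.factorization ℓ + q.factorization ℓ := by
    intro ℓ; rw [Nat.factorization_mul hp0 hq0, Finsupp.add_apply]
  have hvrn : ∀ ℓ : ℕ, (r * n).factorization ℓ = r.factorization ℓ + n.factorization ℓ := by
    intro ℓ; rw [Nat.factorization_mul hr0 hn0, Finsupp.add_apply]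
  have key : ∀ (x y : ℕ), x ≠ 0 → y ≠ 0 →
      (∀ ℓ, ℓ.Prime → x.factorization ℓ ≤ y.factorization ℓ) → x ∣ y := by
    intro x y hx hy h
    rw [← Nat.factorization_le_iff_dvd hx hy, Finsupp.le_def]
    intro ℓ
    by_cases hℓ : ℓ.Prime
    · exact h ℓ hℓ
    · simp [Nat.factorization_eq_zero_of_not_prime _ hℓ]
  have hI : δ * p ∣ r := by
    refine key _ _ (mul_ne_zero hδ0 hp0) hr0 fun ℓ hℓ => ?_
    rw [Nat.factorization_mul hδ0 hp0, Finsupp.add_apply, hvδ ℓ hℓ]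
    obtain ⟨haR, ha'R, hbR, hb'R, hab, habRN, hm1, hm2⟩ := facts ℓ hℓ
    rw [hvpq, hvrn]
    split <;> omega
  have hII : δ * p * q ∣ r * n := by
    refine key _ _ (mul_ne_zero (mul_ne_zero hδ0 hp0) hq0) hrn0 fun ℓ hℓ => ?_
    rw [Nat.factorization_mul (mul_ne_zero hδ0 hp0) hq0, Finsupp.add_apply,
      Nat.factorization_mul hδ0 hp0, Finsupp.add_apply, hvδ ℓ hℓ, hvrn, hvpq]
    obtain ⟨haR, ha'R, hbR, hb'R, hab, habRN, hm1, hm2⟩ := facts ℓ hℓ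
    split <;> omega
  have hIII : Nat.gcd (n * m) (δ * p) = p := by
    have hnm0 : n * m ≠ 0 := mul_ne_zero hn0 hm0
    have hgcd0 : Nat.gcd (n * m) (δ * p) ≠ 0 := Nat.gcd_ne_zero_left hnm0
    refine Nat.dvd_antisymm ?_ (Nat.dvd_gcd ?_ (Dvd.intro δ (mul_comm p δ)))
    · refine key _ _ hgcd0 hp0 fun ℓ hℓ => ?_
      rw [Nat.factorization_gcd hnm0 (mul_ne_zero hδ0 hp0), Finsupp.inf_apply,
        Nat.factorization_mul hn0 hm0, Finsupp.add_apply,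
        Nat.factorization_mul hδ0 hp0, Finsupp.add_apply, hvδ ℓ hℓ, hvm ℓ hℓ, hvpq, hvrn]
      obtain ⟨haR, ha'R, hbR, hb'R, hab, habRN, hm1, hm2⟩ := facts ℓ hℓ
      split <;> omega
    · refine key _ _ hp0 hnm0 fun ℓ hℓ => ?_
      rw [Nat.factorization_mul hn0 hm0, Finsupp.add_apply, hvm ℓ hℓ]
      obtain ⟨haR, ha'R, hbR, hb'R, hab, habRN, hm1, hm2⟩ := facts ℓ hℓ
      split <;> omega
  have hIV : (r / q) ∣ m * δ := by
    have hrq0 : r / q ≠ 0 := by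
      rw [Nat.div_ne_zero_iff]; exact ⟨hq0, Nat.le_of_dvd hr hq⟩
    refine key _ _ hrq0 (mul_ne_zero hm0 hδ0) fun ℓ hℓ => ?_
    rw [Nat.factorization_div hq, Finsupp.tsub_apply,
      Nat.factorization_mul hm0 hδ0, Finsupp.add_apply, hvδ ℓ hℓ, hvm ℓ hℓ, hvpq, hvrn]
    obtain ⟨haR, ha'R, hbR, hb'R, hab, habRN, hm1, hm2⟩ := facts ℓ hℓ
    split <;> omega
  exact ⟨Nat.pos_of_ne_zero hδ0, m, Nat.pos_of_ne_zero hm0, hI, hII, hIII, hIV⟩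

section Aux

lemma castHom_apply_val {r d : ℕ} [NeZero r] (hd : d ∣ r) (y : ZMod r) :
    ZMod.castHom hd (ZMod d) y = ((y.val : ℕ) : ZMod d) := by
  conv_lhs => rw [← ZMod.natCast_rightInverse y]
  rw [map_natCast]

lemma mem_pZ_iff {r d : ℕ} (hr : r ≠ 0) (hd : d ∣ r) (y : ZMod r) :
    ofAdd y ∈ pZ r d ↔ ZMod.castHom hd (ZMod d) y = 0 := by
  haveI : NeZero r := ⟨hr⟩
  haveI : NeZero d := ⟨fun h => hr (zero_dvd_iff.mp (h ▸ hd))⟩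
  have hmem : ofAdd y ∈ pZ r d ↔ y ∈ AddSubgroup.zmultiples ((d : ℕ) : ZMod r) := Iff.rfl
  rw [hmem, AddSubgroup.mem_zmultiples_iff]
  constructor
  · rintro ⟨k, rfl⟩
    rw [map_zsmul]
    simp
  · intro h0
    rw [castHom_apply_val, ZMod.natCast_eq_zero_iff] at h0
    obtain ⟨t, ht⟩ := h0
    refine ⟨(t : ℤ), ?_⟩
    have : ((d * t : ℕ) : ZMod r) = y := by
      rw [← ht, ZMod.natCast_rightInverse y]
    rw [← this, zsmul_eq_mul]
    push_cast
    ring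

lemma mem_Grpn_iff {r d n : ℕ} (hr : r ≠ 0) (hd : d ∣ r) (g : GG r n) :
    g ∈ Grpn r d n ↔
      ZMod.castHom hd (ZMod d) (toAdd (DeltaHom r n g)) = 0 := by
  exact mem_pZ_iff hr hd (toAdd (DeltaHom r n g))

lemma Delta_cEl (r n : ℕ) :
    DeltaHom r n (cEl r n) = ofAdd ((n : ZMod r)) := by
  rw [cEl, DeltaHom, SemidirectProduct.lift_inl]
  show ofAdd (∑ _i : Fin n, (1 : ZMod r)) = _
  simp

lemma Delta_cEl_pow (r n t : ℕ) :
    toAdd (DeltaHom r n (cEl r n ^ t)) = ((t * n : ℕ) : ZMod r) := by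
  rw [map_pow, Delta_cEl, toAdd_pow, toAdd_ofAdd, nsmul_eq_mul]
  push_cast
  ring

end Aux


lemma zpow_eq_pow_val {G : Type*} [Group G] {d : ℕ} [NeZero d] {x : G} (h : x ^ d = 1) (k : ℤ) :
    x ^ k = x ^ ((k : ZMod d)).val := by
  set w : ℕ := ((k : ZMod d)).val with hw
  have hcast : ((w : ℤ) : ZMod d) = ((k : ℤ) : ZMod d) := by
    rw [Int.cast_natCast, hw, ZMod.natCast_val, ZMod.cast_id]
  have hmod : (w : ℤ) ≡ k [ZMOD d] := (ZMod.intCast_eq_intCast_iff _ _ _).mp hcast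
  obtain ⟨t, ht⟩ := Int.ModEq.dvd hmod
  have hk : k = (w : ℤ) + d * t := by linarith
  rw [hk, zpow_add, zpow_natCast, zpow_mul, zpow_natCast, h, one_zpow, mul_one]

/-- Assume `gcd(p,n) = gcd(p',n)` and `gcd(q,n) = gcd(q',n)` with
`pq = p'q'` dividing `rn`.  A prime is *special* if it appears with different
multiplicities in `p` and `p'`.  Write `rn/(pq) = η·δ` where `δ` is the largest
divisor of `rn/(pq)` all of whose prime factors are special.  Then `G(r,δp,q,n)`
is well-defined and `G(r,p,q,n) ≅ G(r,δp,q,n) × ℤ/δℤ`. -/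
theorem Gpq_iso_prod_of_special_decomposition
    (r n p p' q q' : ℕ) (hr : 0 < r) (hn : 0 < n)
    (hp : p ∣ r) (hp' : p' ∣ r) (hq : q ∣ r) (hq' : q' ∣ r)
    (hprod : p * q = p' * q') (hdvd : p * q ∣ r * n)
    (h1 : Nat.gcd p n = Nat.gcd p' n) (h2 : Nat.gcd q n = Nat.gcd q' n)
    (δ : ℕ)
    (hδ : δ = ∏ π ∈ (r * n / (p * q)).primeFactors,
        if π.Prime ∧ p.factorization π ≠ p'.factorization π
        then π ^ (r * n / (p * q)).factorization π else 1) :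
    δ * p ∣ r ∧ δ * p * q ∣ r * n ∧
      Nonempty (Gpq r p q n ≃* Gpq r (δ * p) q n × Multiplicative (ZMod δ)) := by
  obtain ⟨hδpos, m, hmpos, hI, hII, hIII, hIV⟩ :=
    arith r n p p' q q' hr hn hp hp' hq hq' hprod hdvd h1 h2 δ hδ
  refine ⟨hI, hII, ?_⟩
  have hr0 : r ≠ 0 := hr.ne'
  haveI : NeZero r := ⟨hr0⟩
  haveI : NeZero δ := ⟨hδpos.ne'⟩
  have hp0 : p ≠ 0 := by rintro rfl; exact hr0 (zero_dvd_iff.mp hp)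
  have hq0 : q ≠ 0 := by rintro rfl; exact hr0 (zero_dvd_iff.mp hq)
  have hδp : δ * p ∣ r := hI
  have hnrq : δ * p ∣ (r / q) * n := by
    have h : δ * p * q ∣ ((r / q) * n) * q := by
      rw [mul_comm (r / q) n, mul_assoc n (r / q) q, Nat.div_mul_cancel hq, mul_comm n r]
      exact hII
    exact (Nat.mul_dvd_mul_iff_right (Nat.pos_of_ne_zero hq0)).mp h
  have hGle : Grpn r (δ * p) n ≤ Grpn r p n := by
    intro g hg
    rw [mem_Grpn_iff hr0 hδp, castHom_apply_val, ZMod.natCast_eq_zero_iff] at hg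
    rw [mem_Grpn_iff hr0 hp, castHom_apply_val, ZMod.natCast_eq_zero_iff]
    exact (dvd_mul_left p δ).trans hg
  have hcq0 : ZMod.castHom hδp (ZMod (δ * p))
      (toAdd (DeltaHom r n (cEl r n ^ (r / q)))) = 0 := by
    rw [Delta_cEl_pow, map_natCast, ZMod.natCast_eq_zero_iff]
    exact hnrq
  have hCQle : CsubQ r q n ≤ Grpn r (δ * p) n := by
    intro g hg
    obtain ⟨s, rfl⟩ := Subgroup.mem_zpowers_iff.mp hg
    rw [mem_Grpn_iff hr0 hδp, map_zpow, toAdd_zpow, map_zsmul, hcq0, smul_zero]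
  have hpnm : p ∣ n * m := hIII ▸ Nat.gcd_dvd_left _ _
  have hCmem : cEl r n ^ m ∈ Grpn r p n := by
    rw [mem_Grpn_iff hr0 hp, Delta_cEl_pow, map_natCast, ZMod.natCast_eq_zero_iff,
      mul_comm]
    exact hpnm
  set C : ↥(Grpn r p n) := ⟨cEl r n ^ m, hCmem⟩ with hC
  have hcomm : ∀ g : GG r n, Commute g (cEl r n ^ m) := fun g =>
    (show Commute g (cEl r n) from Subgroup.mem_center_iff.mp (cEl_mem_center r n) g).pow_right m
  have hcommC : ∀ x : ↥(Grpn r p n), Commute x C := fun x => Subtype.ext (hcomm x.1)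
  set cbar : Gpq r p q n := Gmk r p q n C with hcbar
  have hCδmem : (C ^ δ : ↥(Grpn r p n)) ∈ CsubIn r p q n := by
    show ((C ^ δ : ↥(Grpn r p n)) : GG r n) ∈ CsubQ r q n
    obtain ⟨t, ht⟩ := hIV
    have hcoe : ((C ^ δ : ↥(Grpn r p n)) : GG r n) = (cEl r n ^ (r / q)) ^ t := by
      rw [SubmonoidClass.coe_pow]
      show (cEl r n ^ m) ^ δ = _
      rw [← pow_mul, ← pow_mul, ← ht]
    rw [hcoe]
    exact Subgroup.pow_mem _ (Subgroup.mem_zpowers _) t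
  have hcbarδ : cbar ^ δ = 1 := by
    rw [hcbar, ← map_pow]
    exact (QuotientGroup.eq_one_iff _).mpr hCδmem
  set f : Multiplicative (ZMod δ) →* Gpq r p q n :=
    { toFun := fun k => cbar ^ (toAdd k).val
      map_one' := by
        show cbar ^ (toAdd (1 : Multiplicative (ZMod δ))).val = 1
        rw [toAdd_one, ZMod.val_zero, pow_zero]
      map_mul' := fun a b => by
        show cbar ^ (toAdd (a * b)).val = cbar ^ (toAdd a).val * cbar ^ (toAdd b).val
        rw [toAdd_mul, ZMod.val_add, ← pow_eq_pow_mod _ hcbarδ, pow_add] } with hf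
  have hmaple : CsubIn r (δ * p) q n ≤
      Subgroup.comap (Subgroup.inclusion hGle) (CsubIn r p q n) := by
    intro x hx
    show ((Subgroup.inclusion hGle x : ↥(Grpn r p n)) : GG r n) ∈ CsubQ r q n
    rw [Subgroup.coe_inclusion]
    exact hx
  set ι : Gpq r (δ * p) q n →* Gpq r p q n :=
    QuotientGroup.map _ _ (Subgroup.inclusion hGle) hmaple with hι
  have hcommy : ∀ y : Gpq r p q n, Commute y cbar := by
    intro y
    induction y using QuotientGroup.induction_on with
    | _ z => exact (hcommC z).map (Gmk r p q n)
  have hcommψ : ∀ (x : Gpq r (δ * p) q n) (k : Multiplicative (ZMod δ)),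
      Commute (ι x) (f k) := fun x k => (hcommy (ι x)).pow_right _
  set ψ := MonoidHom.noncommCoprod ι f hcommψ with hψ
  have hco : Nat.Coprime (n * m / p) δ := by
    have e1 : p * Nat.gcd (n * m / p) δ = p * 1 := by
      rw [← Nat.gcd_mul_left, Nat.mul_div_cancel' hpnm, mul_comm p δ, hIII, mul_one]
    exact Nat.eq_of_mul_eq_mul_left (Nat.pos_of_ne_zero hp0) e1
  have hdvdδ : ∀ v : ℕ, δ * p ∣ n * m * v → δ ∣ v := by
    intro v hv
    have h2' : p * δ ∣ p * (n * m / p * v) := by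
      rw [← mul_assoc, Nat.mul_div_cancel' hpnm, mul_comm p δ]
      exact hv
    have h3 : δ ∣ n * m / p * v := (Nat.mul_dvd_mul_iff_left (Nat.pos_of_ne_zero hp0)).mp h2'
    exact (hco.symm).dvd_of_dvd_mul_left h3
  -- injectivity
  have hinj : Function.Injective ψ := by
    rw [injective_iff_map_eq_one]
    rintro ⟨x, k⟩ hxk
    obtain ⟨⟨g', hg'⟩, rfl⟩ := QuotientGroup.mk'_surjective (CsubIn r (δ * p) q n) x
    set v : ℕ := (toAdd k).val with hv
    rw [hψ, MonoidHom.noncommCoprod_apply] at hxk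
    have hxk' : Gmk r p q n (Subgroup.inclusion hGle ⟨g', hg'⟩ * C ^ v) = 1 := by
      rw [map_mul, map_pow]
      rw [hι, QuotientGroup.map_mk'] at hxk
      exact hxk
    have hmemG : (g' * (cEl r n ^ m) ^ v : GG r n) ∈ CsubQ r q n := by
      have := (QuotientGroup.eq_one_iff _).mp hxk'
      have h2 : ((Subgroup.inclusion hGle ⟨g', hg'⟩ * C ^ v : ↥(Grpn r p n)) : GG r n)
          ∈ CsubQ r q n := this
      rwa [Subgroup.coe_mul, SubmonoidClass.coe_pow, Subgroup.coe_inclusion] at h2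
    obtain ⟨s, hs⟩ := Subgroup.mem_zpowers_iff.mp hmemG
    have heq := congrArg (fun z : GG r n =>
      ZMod.castHom hδp (ZMod (δ * p)) (toAdd (DeltaHom r n z))) hs
    simp only [map_zpow, toAdd_zpow, map_zsmul, hcq0, smul_zero, map_mul, toAdd_mul,
      map_add] at heq
    have hg'0 : ZMod.castHom hδp (ZMod (δ * p)) (toAdd (DeltaHom r n g')) = 0 :=
      (mem_Grpn_iff hr0 hδp g').mp hg'
    rw [hg'0, zero_add, ← pow_mul, Delta_cEl_pow, map_natCast] at heq
    have hdvd2 : δ * p ∣ m * v * n := by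
      rw [eq_comm, ZMod.natCast_eq_zero_iff] at heq
      exact heq
    have hδv : δ ∣ v := hdvdδ v (by
      have : n * m * v = m * v * n := by ring
      rw [this]; exact hdvd2)
    have hv0 : v = 0 := Nat.eq_zero_of_dvd_of_lt hδv (hv ▸ ZMod.val_lt (toAdd k))
    have hval0 : (toAdd k).val = 0 := by rw [← hv]; exact hv0
    have hk1 : k = 1 := toAdd_eq_zero.mp ((ZMod.val_eq_zero _).mp hval0)
    have hfk : f k = 1 := by rw [hk1, map_one]
    rw [hι, QuotientGroup.map_mk'] at hxk
    have hι1 : ((Subgroup.inclusion hGle ⟨g', hg'⟩ : ↥(Grpn r p n)) : Gpq r p q n) = 1 := by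
      rw [hfk, mul_one] at hxk
      exact hxk
    have hmem2 : (⟨g', hg'⟩ : ↥(Grpn r (δ * p) n)) ∈ CsubIn r (δ * p) q n := by
      have h4 := (QuotientGroup.eq_one_iff _).mp hι1
      show ((⟨g', hg'⟩ : ↥(Grpn r (δ * p) n)) : GG r n) ∈ CsubQ r q n
      have h5 : ((Subgroup.inclusion hGle ⟨g', hg'⟩ : ↥(Grpn r p n)) : GG r n)
          ∈ CsubQ r q n := h4
      rwa [Subgroup.coe_inclusion] at h5
    refine Prod.ext ?_ hk1
    show QuotientGroup.mk' (CsubIn r (δ * p) q n) ⟨g', hg'⟩ = 1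
    rw [QuotientGroup.mk'_apply, QuotientGroup.eq_one_iff]
    exact hmem2
  -- surjectivity
  have hsurj : Function.Surjective ψ := by
    intro y
    induction y using QuotientGroup.induction_on with
    | _ z =>
    obtain ⟨g, hg⟩ := z
    have hgval : p ∣ (toAdd (DeltaHom r n g)).val := by
      have h0 := (mem_Grpn_iff hr0 hp g).mp hg
      rwa [castHom_apply_val, ZMod.natCast_eq_zero_iff] at h0
    set u : ℕ := (toAdd (DeltaHom r n g)).val / p with hu
    have hpu : p * u = (toAdd (DeltaHom r n g)).val := Nat.mul_div_cancel' hgval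
    set A : ℤ := Nat.gcdA (n * m) (δ * p) with hA
    set B : ℤ := Nat.gcdB (n * m) (δ * p) with hB
    have hbez : (p : ℤ) = ((n * m : ℕ) : ℤ) * A + ((δ * p : ℕ) : ℤ) * B := by
      have hb := Nat.gcd_eq_gcd_ab (n * m) (δ * p)
      rw [hIII] at hb
      exact hb
    set kZ : ℤ := A * u with hkZ
    have hg'mem : g * (cEl r n ^ m) ^ (-kZ) ∈ Grpn r (δ * p) n := by
      rw [mem_Grpn_iff hr0 hδp, map_mul, toAdd_mul, map_add, map_zpow, toAdd_zpow, map_zsmul,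
        Delta_cEl_pow, map_natCast, castHom_apply_val, ← hpu]
      have hbez' := congrArg (fun z : ℤ => (z : ZMod (δ * p))) hbez
      push_cast at hbez'
      have hz' : ((δ : ZMod (δ * p)) * (p : ZMod (δ * p))) = 0 := by
        rw [← Nat.cast_mul, ZMod.natCast_self]
      have hkZ' := congrArg (fun z : ℤ => (z : ZMod (δ * p))) hkZ
      push_cast at hkZ'
      rw [zsmul_eq_mul]
      push_cast
      linear_combination (u : ZMod (δ * p)) * hbez'
        + ((u : ZMod (δ * p)) * (B : ZMod (δ * p))) * hz'
        - ((m : ZMod (δ * p)) * (n : ZMod (δ * p))) * hkZ'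
    refine ⟨(QuotientGroup.mk' (CsubIn r (δ * p) q n) ⟨g * (cEl r n ^ m) ^ (-kZ), hg'mem⟩,
      ofAdd ((kZ : ZMod δ))), ?_⟩
    rw [hψ, MonoidHom.noncommCoprod_apply]
    dsimp only
    rw [hι, QuotientGroup.map_mk']
    have hfval : f (ofAdd ((kZ : ZMod δ))) = cbar ^ kZ := by
      show cbar ^ ((toAdd (ofAdd ((kZ : ZMod δ)))).val) = cbar ^ kZ
      rw [toAdd_ofAdd]
      exact (zpow_eq_pow_val hcbarδ kZ).symm
    rw [hfval, hcbar]
    have hsub : (Subgroup.inclusion hGle ⟨g * (cEl r n ^ m) ^ (-kZ), hg'mem⟩) * C ^ kZ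
        = (⟨g, hg⟩ : ↥(Grpn r p n)) := by
      apply Subtype.ext
      rw [Subgroup.coe_mul, SubgroupClass.coe_zpow, Subgroup.coe_inclusion]
      show (g * (cEl r n ^ m) ^ (-kZ)) * ((cEl r n ^ m : GG r n)) ^ kZ = g
      rw [zpow_neg, inv_mul_cancel_right]
    calc ((Subgroup.inclusion hGle ⟨g * (cEl r n ^ m) ^ (-kZ), hg'mem⟩ : ↥(Grpn r p n))
          : Gpq r p q n) * (Gmk r p q n C) ^ kZ
        = Gmk r p q n ((Subgroup.inclusion hGle ⟨g * (cEl r n ^ m) ^ (-kZ), hg'mem⟩) * C ^ kZ) := by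
          rw [map_mul, map_zpow]; rfl
      _ = _ := by rw [hsub]; rfl
  exact ⟨(MulEquiv.ofBijective ψ ⟨hinj, hsurj⟩).symm⟩
end

section
/- Let r be a positive integer and let p, p', q, q' be positive divisors of r with pq = p'q' dividing 2r. If exactly one of the four integers p, p', q, q' is odd, then G(r,p,q,2) and G(r,p',q',2) are not isomorphic as groups. -/
open SemidirectProduct Multiplicative

section Statement6Aux

lemma cEl_pow_zpow (r q : ℕ) (k : ℤ) :
    (cEl r 2 ^ (r / q)) ^ k
      = inl (ofAdd fun _ : Fin 2 => (k • ((r / q : ℕ) : ZMod r))) := by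
  rw [cEl, ← map_pow, ← map_zpow]
  congr 1
  apply Multiplicative.toAdd.injective
  funext i
  simp [toAdd_zpow, toAdd_pow, nsmul_eq_mul]

lemma inl_mem_CsubQ_iff (r q : ℕ) (a : Multiplicative (Fin 2 → ZMod r)) :
    inl a ∈ CsubQ r q 2 ↔ ∃ k : ℤ, a.toAdd = fun _ : Fin 2 => k • ((r / q : ℕ) : ZMod r) := by
  rw [CsubQ, Subgroup.mem_zpowers_iff]
  constructor
  · rintro ⟨k, hk⟩
    rw [cEl_pow_zpow] at hk
    refine ⟨k, ?_⟩
    rw [← inl_inj.mp hk]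
    simp
  · rintro ⟨k, hk⟩
    refine ⟨k, ?_⟩
    rw [cEl_pow_zpow]
    congr 1
    apply Multiplicative.toAdd.injective
    simpa using hk.symm

lemma mem_Grpn_iff_s6 (r p : ℕ) (g : GG r 2) :
    g ∈ Grpn r p 2 ↔ ∃ t : ℤ, g.left.toAdd 0 + g.left.toAdd 1 = t • ((p : ℕ) : ZMod r) := by
  have hD : DeltaHom r 2 g = ofAdd (g.left.toAdd 0 + g.left.toAdd 1) := by
    show sumHom r 2 g.left * (1 : Equiv.Perm (Fin 2) →* Multiplicative (ZMod r)) g.right = _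
    simp [sumHom, Fin.sum_univ_two]
  rw [Grpn, Subgroup.mem_comap, hD]
  have hmem : ofAdd (g.left.toAdd 0 + g.left.toAdd 1) ∈ pZ r p
      ↔ (g.left.toAdd 0 + g.left.toAdd 1) ∈ AddSubgroup.zmultiples ((p : ℕ) : ZMod r) :=
    Iff.rfl
  rw [hmem, AddSubgroup.mem_zmultiples_iff]
  exact ⟨fun ⟨t, ht⟩ => ⟨t, ht.symm⟩, fun ⟨t, ht⟩ => ⟨t, ht.symm⟩⟩

lemma zmod_ker (r q : ℕ) (hr : 0 < r) (hq : q ∣ r) (u : ZMod r)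
    (h : (q : ZMod r) * u = 0) :
    ∃ k : ℤ, u = k • ((r / q : ℕ) : ZMod r) := by
  haveI : NeZero r := ⟨hr.ne'⟩
  have hq0 : 0 < q := Nat.pos_of_dvd_of_pos hq hr
  have h1 : ((q * u.val : ℕ) : ZMod r) = 0 := by
    push_cast
    rw [ZMod.natCast_val, ZMod.cast_id]
    exact h
  rw [ZMod.natCast_eq_zero_iff] at h1
  obtain ⟨m, hm⟩ := h1
  have hv : u.val = (r / q) * m := by
    have h2 : q * u.val = q * ((r / q) * m) := by
      rw [hm, ← mul_assoc, Nat.mul_div_cancel' hq]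
    exact Nat.eq_of_mul_eq_mul_left hq0 h2
  refine ⟨(m : ℤ), ?_⟩
  have hu : u = ((u.val : ℕ) : ZMod r) := by rw [ZMod.natCast_val, ZMod.cast_id]
  rw [hu, hv]
  push_cast [zsmul_eq_mul]
  ring

lemma pow_half_mem_CsubQ (r p q : ℕ) (hr0 : 0 < r) (h4 : 4 ∣ r) (hp2 : 2 ∣ p) (hq2 : 2 ∣ q)
    (hqr : q ∣ r) (g : GG r 2) (hg : g ∈ Grpn r p 2) :
    g ^ (r / 2) ∈ CsubQ r q 2 := by
  obtain ⟨t, ht⟩ := (mem_Grpn_iff_s6 r p g).mp hg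
  obtain ⟨b, hb⟩ := hp2
  obtain ⟨c, hc⟩ := hq2
  have hπ : g.right = 1 ∨ g.right = Equiv.swap 0 1 := by
    have h' : ∀ π : Equiv.Perm (Fin 2), π = 1 ∨ π = Equiv.swap 0 1 := by decide
    exact h' g.right
  set x := g.left.toAdd with hx
  rcases hπ with hπ | hπ
  · -- translation case
    have hgl : g = inl g.left := SemidirectProduct.ext rfl hπ
    rw [hgl, ← map_pow, inl_mem_CsubQ_iff]
    have hpow : (g.left ^ (r / 2)).toAdd = (r / 2) • x := toAdd_pow _ _
    set u : ZMod r := (r / 2) • x 0 with hu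
    have h2u : u + u = 0 := by
      have e : (r / 2) • x 0 + (r / 2) • x 0 = r • x 0 := by
        rw [← add_nsmul]
        congr 1
        omega
      rw [hu, e, nsmul_eq_mul, ZMod.natCast_self, zero_mul]
    have hsum : (r / 2) • x 0 + (r / 2) • x 1 = 0 := by
      rw [← smul_add, ht, smul_comm]
      have e : (r / 2) • ((p : ℕ) : ZMod r) = 0 := by
        obtain ⟨a, ha⟩ := h4
        have e1 : r / 2 = 2 * a := by omega
        have e2 : ((2 * a) * p : ℕ) = r * b := by rw [hb, ha]; ring
        rw [e1, nsmul_eq_mul, ← Nat.cast_mul, e2]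
        push_cast
        simp
      rw [e, smul_zero]
    have hx1 : (r / 2) • x 1 = u := by
      have hneg : -u = u := by
        rw [neg_eq_iff_add_eq_zero]
        exact h2u
      have e : (r / 2) • x 1 = -u := by
        rw [eq_neg_iff_add_eq_zero, add_comm]
        exact hsum
      rw [e, hneg]
    have hqu : (q : ZMod r) * u = 0 := by
      have h2mu : (2 : ZMod r) * u = 0 := by rw [two_mul]; exact h2u
      have e : ((q : ℕ) : ZMod r) * u = (c : ZMod r) * ((2 : ZMod r) * u) := by
        rw [hc]
        push_cast
        ring
      rw [e, h2mu, mul_zero]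
    obtain ⟨k, hk⟩ := zmod_ker r q hr0 hqr u hqu
    refine ⟨k, ?_⟩
    rw [hpow]
    funext i
    rw [Pi.smul_apply]
    fin_cases i
    · exact hu ▸ hk
    · rw [show ((⟨1, by norm_num⟩ : Fin 2)) = (1 : Fin 2) from rfl, hx1]
      exact hk
  · -- reflection case
    have h2g : g ^ 2 = inl (ofAdd fun _ : Fin 2 => x 0 + x 1) := by
      rw [pow_two]
      refine SemidirectProduct.ext ?_ ?_
      · show g.left * (permAct r 2 g.right) g.left = _
        apply Multiplicative.toAdd.injective
        funext i
        have e : (g.left * (permAct r 2 g.right) g.left).toAdd i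
            = x i + x (g.right.symm i) := rfl
        rw [e, hπ, Equiv.symm_swap]
        fin_cases i
        · simp
        · rw [show ((⟨1, by norm_num⟩ : Fin 2)) = (1 : Fin 2) from rfl,
            Equiv.swap_apply_right]
          simpa using add_comm (x 1) (x 0)
      · show g.right * g.right = 1
        rw [hπ]
        exact Equiv.swap_mul_self _ _
    have hhalf : r / 2 = 2 * (r / 4) := by omega
    rw [hhalf, pow_mul, h2g, ← map_pow, inl_mem_CsubQ_iff]
    refine ⟨t * ((p * q) / 4 : ℕ), ?_⟩
    funext i
    rw [toAdd_pow]
    simp only [Pi.smul_apply, toAdd_ofAdd]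
    rw [ht, smul_comm]
    have hnat : (r / 4) * p = ((p * q) / 4) * (r / q) := by
      obtain ⟨a, ha⟩ := h4
      obtain ⟨w, hw⟩ := hqr
      have e1 : r / 4 = a := by omega
      have e2 : p * q = 4 * (b * c) := by rw [hb, hc]; ring
      have e3 : (p * q) / 4 = b * c := by
        rw [e2]; exact Nat.mul_div_cancel_left _ (by norm_num)
      have hq0 : 0 < q := by
        rcases Nat.eq_zero_or_pos q with h0 | h0
        · exfalso; rw [h0, zero_mul] at hw; omega
        · exact h0
      have e4 : r / q = w := by rw [hw]; exact Nat.mul_div_cancel_left _ hq0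
      have h5 : 2 * (2 * a) = 2 * (c * w) := by
        calc 2 * (2 * a) = 4 * a := by ring
          _ = 2 * c * w := by rw [← ha, ← hc, ← hw]
          _ = 2 * (c * w) := by ring
      have h2a : 2 * a = c * w := Nat.eq_of_mul_eq_mul_left (by norm_num) h5
      rw [e1, e3, e4, hb]
      calc a * (2 * b) = b * (2 * a) := by ring
        _ = b * (c * w) := by rw [h2a]
        _ = b * c * w := by ring
    rw [mul_smul, natCast_zsmul]
    congr 1
    rw [nsmul_eq_mul, nsmul_eq_mul, ← Nat.cast_mul, ← Nat.cast_mul, hnat]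

lemma witness_not_mem (r p q : ℕ) (hr0 : 0 < r) (h4 : 4 ∣ r) (hpr : p ∣ r) (hqr : q ∣ r)
    (hpar : (Odd p ∧ Even q) ∨ (Even p ∧ Odd q)) :
    ∃ g : GG r 2, g ∈ Grpn r p 2 ∧ g ^ (r / 2) ∉ CsubQ r q 2 := by
  refine ⟨inl (ofAdd fun i : Fin 2 => if i = 0 then (1 : ZMod r) else (p : ZMod r) - 1),
    ?_, ?_⟩
  · rw [mem_Grpn_iff_s6]
    refine ⟨1, ?_⟩
    simp
  · rw [← map_pow, inl_mem_CsubQ_iff]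
    rintro ⟨k, hk⟩
    rw [toAdd_pow, toAdd_ofAdd] at hk
    have hk0 := congrFun hk 0
    have hk1 := congrFun hk 1
    rw [Pi.smul_apply, if_pos rfl] at hk0
    rw [Pi.smul_apply, if_neg (by norm_num)] at hk1
    have y0 : ((r / 2 : ℕ) : ZMod r) = k • ((r / q : ℕ) : ZMod r) := by
      rw [← hk0, nsmul_eq_mul, mul_one]
    have hy0ne : ((r / 2 : ℕ) : ZMod r) ≠ 0 := by
      rw [Ne, ZMod.natCast_eq_zero_iff]
      intro hdv
      have h1 : 0 < r / 2 := by omega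
      have h2 := Nat.le_of_dvd h1 hdv
      omega
    rcases hpar with ⟨hop, _⟩ | ⟨hep, hoq⟩
    · -- p odd : second coordinate is 0
      have hp1 : 1 ≤ p := Nat.pos_of_dvd_of_pos hpr hr0
      have hcast : (p : ZMod r) - 1 = ((p - 1 : ℕ) : ZMod r) := by
        rw [Nat.cast_sub hp1]; simp
      obtain ⟨m, hm⟩ := hop
      obtain ⟨a, ha⟩ := h4
      have e1 : (r / 2) * (p - 1) = r * m := by
        have e2 : r / 2 = 2 * a := by omega
        have e3 : p - 1 = 2 * m := by omega
        rw [e2, e3, ha]; ring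
      have y1 : (r / 2) • ((p : ZMod r) - 1) = 0 := by
        rw [hcast, nsmul_eq_mul, ← Nat.cast_mul, e1]
        push_cast
        simp
      rw [y1] at hk1
      exact hy0ne (by rw [y0, ← hk1])
    · -- q odd : multiply the 0-th coordinate relation by q
      obtain ⟨m, hm⟩ := hoq
      have hqmul : (q : ZMod r) * ((r / 2 : ℕ) : ZMod r) = ((r / 2 : ℕ) : ZMod r) := by
        obtain ⟨a, ha⟩ := h4
        have e1 : q * (r / 2) = m * r + r / 2 := by
          have e2 : r / 2 = 2 * a := by omega
          rw [hm, e2, ha]; ring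
        rw [← Nat.cast_mul, e1]
        push_cast
        simp
      have hzero : (q : ZMod r) * (k • ((r / q : ℕ) : ZMod r)) = 0 := by
        rw [mul_smul_comm]
        have e : (q : ZMod r) * ((r / q : ℕ) : ZMod r) = 0 := by
          rw [← Nat.cast_mul, Nat.mul_div_cancel' hqr, ZMod.natCast_self]
        rw [e, smul_zero]
      rw [← y0, hqmul] at hzero
      exact hy0ne hzero

lemma quot_exponent (r p q : ℕ) (hr0 : 0 < r) (h4 : 4 ∣ r) (hp2 : 2 ∣ p) (hq2 : 2 ∣ q)
    (hqr : q ∣ r) (g : Gpq r p q 2) : g ^ (r / 2) = 1 := by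
  obtain ⟨h, rfl⟩ := QuotientGroup.mk'_surjective (CsubIn r p q 2) g
  rw [← map_pow]
  have hmem : (h ^ (r / 2)) ∈ CsubIn r p q 2 := by
    rw [CsubIn, Subgroup.mem_comap, map_pow]
    exact pow_half_mem_CsubQ r p q hr0 h4 hp2 hq2 hqr _ h.2
  rw [QuotientGroup.mk'_apply]
  exact (QuotientGroup.eq_one_iff _).mpr hmem

lemma quot_witness (r p q : ℕ) (hr0 : 0 < r) (h4 : 4 ∣ r) (hpr : p ∣ r) (hqr : q ∣ r)
    (hpar : (Odd p ∧ Even q) ∨ (Even p ∧ Odd q)) :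
    ∃ g : Gpq r p q 2, g ^ (r / 2) ≠ 1 := by
  obtain ⟨w, hw, hnm⟩ := witness_not_mem r p q hr0 h4 hpr hqr hpar
  refine ⟨Gmk r p q 2 ⟨w, hw⟩, fun hcon => hnm ?_⟩
  rw [← map_pow, Gmk, QuotientGroup.mk'_apply] at hcon
  have hmem := (QuotientGroup.eq_one_iff _).mp hcon
  rw [CsubIn, Subgroup.mem_comap, map_pow] at hmem
  simpa using hmem

lemma aux_main (r p q p2 q2 : ℕ) (hr0 : 0 < r) (h4r : 4 ∣ r) (hpr : p ∣ r) (hqr : q ∣ r)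
    (hq2r : q2 ∣ r) (hpar : (Odd p ∧ Even q) ∨ (Even p ∧ Odd q))
    (hp2 : 2 ∣ p2) (hq2 : 2 ∣ q2) : IsEmpty (Gpq r p q 2 ≃* Gpq r p2 q2 2) := by
  constructor
  intro φ
  obtain ⟨g, hg⟩ := quot_witness r p q hr0 h4r hpr hqr hpar
  have hb := quot_exponent r p2 q2 hr0 h4r hp2 hq2 hq2r (φ g)
  exact hg ((MulEquiv.map_eq_one_iff φ).mp (by rw [map_pow, hb]))

end Statement6Aux

/-- If exactly one of `p, p', q, q'` is odd then `G(r,p,q,2)` and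
`G(r,p',q',2)` are not isomorphic. -/
theorem Gpq_rank_two_not_iso_of_exactly_one_odd
    (r p p' q q' : ℕ) (hr : 0 < r)
    (hp : p ∣ r) (hp' : p' ∣ r) (hq : q ∣ r) (hq' : q' ∣ r)
    (hprod : p * q = p' * q') (hdvd : p * q ∣ 2 * r)
    (hone : (Odd p ∧ Even p' ∧ Even q ∧ Even q') ∨
            (Even p ∧ Odd p' ∧ Even q ∧ Even q') ∨
            (Even p ∧ Even p' ∧ Odd q ∧ Even q') ∨
            (Even p ∧ Even p' ∧ Even q ∧ Odd q')) :
    IsEmpty (Gpq r p q 2 ≃* Gpq r p' q' 2) := by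
  have even2 : ∀ n : ℕ, 4 ∣ n → Even n := by
    rintro n ⟨s, rfl⟩; exact ⟨2 * s, by ring⟩
  have cop4 : ∀ n : ℕ, Odd n → Nat.Coprime 4 n := by
    intro n hn
    have hc2 : Nat.Coprime n 2 := hn.coprime_two_right
    have : Nat.Coprime n 4 := by
      have := Nat.Coprime.mul_right hc2 hc2
      simpa using this
    exact this.symm
  rcases hone with ⟨h1, h2, h3, h4⟩ | ⟨h1, h2, h3, h4⟩ | ⟨h1, h2, h3, h4⟩ | ⟨h1, h2, h3, h4⟩
  · -- Odd p; 4 ∣ q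
    have h44 : (4 : ℕ) ∣ p * q := by
      rw [hprod]
      exact mul_dvd_mul h2.two_dvd h4.two_dvd
    have h4q : 4 ∣ q := (cop4 p h1).dvd_of_dvd_mul_left h44
    have h4r : 4 ∣ r := h4q.trans hq
    exact aux_main r p q p' q' hr h4r hp hq hq' (Or.inl ⟨h1, even2 q h4q⟩)
      h2.two_dvd h4.two_dvd
  · -- Odd p'; 4 ∣ q'
    have h44 : (4 : ℕ) ∣ p' * q' := by
      rw [← hprod]
      exact mul_dvd_mul h1.two_dvd h3.two_dvd
    have h4q : 4 ∣ q' := (cop4 p' h2).dvd_of_dvd_mul_left h44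
    have h4r : 4 ∣ r := h4q.trans hq'
    have hempty := aux_main r p' q' p q hr h4r hp' hq' hq (Or.inl ⟨h2, even2 q' h4q⟩)
      h1.two_dvd h3.two_dvd
    exact ⟨fun φ => hempty.false φ.symm⟩
  · -- Odd q; 4 ∣ p
    have h44 : (4 : ℕ) ∣ q * p := by
      rw [mul_comm, hprod]
      exact mul_dvd_mul h2.two_dvd h4.two_dvd
    have h4p : 4 ∣ p := (cop4 q h3).dvd_of_dvd_mul_left h44
    have h4r : 4 ∣ r := h4p.trans hp
    exact aux_main r p q p' q' hr h4r hp hq hq' (Or.inr ⟨even2 p h4p, h3⟩)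
      h2.two_dvd h4.two_dvd
  · -- Odd q'; 4 ∣ p'
    have h44 : (4 : ℕ) ∣ q' * p' := by
      rw [mul_comm, ← hprod]
      exact mul_dvd_mul h1.two_dvd h3.two_dvd
    have h4p : 4 ∣ p' := (cop4 q' h4).dvd_of_dvd_mul_left h44
    have h4r : 4 ∣ r := h4p.trans hp'
    have hempty := aux_main r p' q' p q hr h4r hp' hq' hq (Or.inr ⟨even2 p' h4p, h4⟩)
      h1.two_dvd h3.two_dvd
    exact ⟨fun φ => hempty.false φ.symm⟩
end

section
/- Let r be a positive integer and let p be a positive divisor of r. If p is odd or r/p is odd, then G(r,p,1,2) ≅ G(r,1,p,2); that is, the complex reflection group G(r,p,2) is isomorphic to the quotient of G(r,2) = (ℤ/rℤ)² ⋊ S₂ by its central cyclic subgroup of scalar elements of order p. -/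
open SemidirectProduct Multiplicative

namespace GpqAux


def matM (r : ℕ) (a b : ℤ) : Multiplicative (Fin 2 → ZMod r) →* Multiplicative (Fin 2 → ZMod r) where
  toFun x := ofAdd fun i => (a : ZMod r) * toAdd x i + (b : ZMod r) * toAdd x (i + 1)
  map_one' := by
    refine Multiplicative.toAdd.injective (funext fun i => ?_)
    simp
  map_mul' x y := by
    refine Multiplicative.toAdd.injective (funext fun i => ?_)
    show (a : ZMod r) * toAdd (x * y) i + (b : ZMod r) * toAdd (x * y) (i + 1) = _
    rw [toAdd_mul]
    show _ = (fun i => (a : ZMod r) * toAdd x i + (b : ZMod r) * toAdd x (i + 1)) i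
        + (fun i => (a : ZMod r) * toAdd y i + (b : ZMod r) * toAdd y (i + 1)) i
    simp only [Pi.add_apply]
    ring

lemma permAct_apply (r n : ℕ) (π : Equiv.Perm (Fin n)) (x : Multiplicative (Fin n → ZMod r))
    (i : Fin n) : toAdd (permAct r n π x) i = toAdd x (π.symm i) := rfl

lemma matM_comm (r : ℕ) (a b : ℤ) (π : Equiv.Perm (Fin 2)) (x : Multiplicative (Fin 2 → ZMod r)) :
    matM r a b (permAct r 2 π x) = permAct r 2 π (matM r a b x) := by
  have hπ : ∀ i : Fin 2, π.symm (i + 1) = π.symm i + 1 := by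
    revert π; decide
  refine Multiplicative.toAdd.injective (funext fun i => ?_)
  show (a : ZMod r) * toAdd (permAct r 2 π x) i + (b : ZMod r) * toAdd (permAct r 2 π x) (i + 1)
      = toAdd (matM r a b x) (π.symm i)
  rw [permAct_apply, permAct_apply]
  show _ = (a : ZMod r) * toAdd x (π.symm i) + (b : ZMod r) * toAdd x (π.symm i + 1)
  rw [hπ]

def Phi (r : ℕ) (a b : ℤ) : GG r 2 →* GG r 2 :=
  SemidirectProduct.lift (inl.comp (matM r a b)) inr (by
    intro π
    refine MonoidHom.ext fun x => ?_
    show inl (matM r a b (permAct r 2 π x)) = MulAut.conj (inr π) (inl (matM r a b x))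
    rw [matM_comm]
    show _ = inr π * inl (matM r a b x) * (inr π)⁻¹
    rw [← map_inv, ← inl_aut])

lemma Phi_apply (r : ℕ) (a b : ℤ) (g : GG r 2) :
    Phi r a b g = ⟨matM r a b g.left, g.right⟩ := by
  conv_lhs => rw [← inl_left_mul_inr_right g]
  rw [map_mul]
  simp only [Phi, lift_inl, lift_inr, MonoidHom.comp_apply]
  ext <;> simp


variable {r : ℕ}

lemma fin_add_01 : ((0:Fin 2)+1 = 1) ∧ ((1:Fin 2)+1 = 0) := by decide

lemma toAdd_matM (a b : ℤ) (x : Multiplicative (Fin 2 → ZMod r)) (i : Fin 2) :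
    toAdd (matM r a b x) i = (a : ZMod r) * toAdd x i + (b : ZMod r) * toAdd x (i + 1) := rfl

lemma Delta_mk (n : Multiplicative (Fin 2 → ZMod r)) (π : Equiv.Perm (Fin 2)) :
    DeltaHom r 2 ⟨n, π⟩ = ofAdd (toAdd n 0 + toAdd n 1) := by
  have h : (⟨n, π⟩ : GG r 2) = inl n * inr π := by ext <;> simp
  rw [h, map_mul]
  simp only [DeltaHom, lift_inl, lift_inr]
  simp [sumHom, Fin.sum_univ_two]

lemma mem_pZ_iff (p : ℕ) (x : Multiplicative (ZMod r)) :
    x ∈ pZ r p ↔ ∃ k : ℤ, k • ((p : ℕ) : ZMod r) = toAdd x := by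
  have h : x ∈ pZ r p ↔ toAdd x ∈ AddSubgroup.zmultiples ((p : ℕ) : ZMod r) := Iff.rfl
  rw [h]
  exact AddSubgroup.mem_zmultiples_iff

lemma Phi_mem [NeZero r] (p : ℕ) (a b : ℤ) (hab : a + b = (p : ℤ)) (g : GG r 2) :
    Phi r a b g ∈ Grpn r p 2 := by
  rw [Grpn, Subgroup.mem_comap, Phi_apply, Delta_mk, mem_pZ_iff]
  set L := toAdd g.left with hL
  refine ⟨((L 0 + L 1).val : ℤ), ?_⟩
  have h1 : (((L 0 + L 1).val : ℤ) : ZMod r) = L 0 + L 1 := by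
    push_cast
    exact ZMod.natCast_rightInverse _
  rw [zsmul_eq_mul, h1]
  have hab' : (a : ZMod r) + (b : ZMod r) = ((p : ℕ) : ZMod r) := by
    exact_mod_cast congrArg (Int.cast : ℤ → ZMod r) hab
  rw [toAdd_ofAdd]
  rw [toAdd_matM, toAdd_matM, fin_add_01.1, fin_add_01.2]
  linear_combination (-(L 0 + L 1)) * hab'

lemma mem_Grpn_one [NeZero r] (g : GG r 2) : g ∈ Grpn r 1 2 := by
  rw [Grpn, Subgroup.mem_comap, mem_pZ_iff]
  refine ⟨((toAdd (DeltaHom r 2 g)).val : ℤ), ?_⟩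
  rw [zsmul_eq_mul]
  push_cast
  rw [mul_one]
  exact ZMod.natCast_rightInverse _

lemma cEl_pow_zpow (m : ℕ) (j : ℤ) :
    (cEl r 2 ^ m) ^ j = inl (ofAdd fun _ => (j : ZMod r) * ((m : ℕ) : ZMod r)) := by
  rw [cEl, ← map_pow, ← map_zpow]
  congr 1
  refine Multiplicative.toAdd.injective (funext fun i => ?_)
  rw [toAdd_zpow, toAdd_pow, toAdd_ofAdd]
  show (j • (m • fun _ => (1 : ZMod r))) i = _
  simp only [Pi.smul_apply]
  rw [zsmul_eq_mul, nsmul_eq_mul, mul_one]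
  rfl

lemma cEl_pow_r [NeZero r] : cEl r 2 ^ r = 1 := by
  have h := cEl_pow_zpow (r := r) r 1
  rw [zpow_one] at h
  rw [h]
  have h2 : (ofAdd fun _ : Fin 2 => ((1 : ℤ) : ZMod r) * ((r : ℕ) : ZMod r)) =
      (1 : Multiplicative (Fin 2 → ZMod r)) := by
    refine Multiplicative.toAdd.injective (funext fun i => ?_)
    simp [ZMod.natCast_self]
  rw [h2, map_one]

lemma Phi_inl (a b : ℤ) (n : Multiplicative (Fin 2 → ZMod r)) :
    Phi r a b (inl n) = inl (matM r a b n) := by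
  simp only [Phi, lift_inl, MonoidHom.comp_apply]

lemma Phi_eq_one_iff [NeZero r] (p m : ℕ) (a b : ℤ) (hrm : r = p * m) (hab : a + b = (p : ℤ))
    (hker : ∀ x y : ZMod r, (a : ZMod r) * x + (b : ZMod r) * y = 0 →
      (b : ZMod r) * x + (a : ZMod r) * y = 0 →
      x = y ∧ ∃ j : ℤ, x = (j : ZMod r) * ((m : ℕ) : ZMod r))
    (g : GG r 2) : Phi r a b g = 1 ↔ g ∈ Subgroup.zpowers (cEl r 2 ^ m) := by
  have hab' : (a : ZMod r) + (b : ZMod r) = ((p : ℕ) : ZMod r) := by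
    exact_mod_cast congrArg (Int.cast : ℤ → ZMod r) hab
  have hpm : ((p : ℕ) : ZMod r) * ((m : ℕ) : ZMod r) = 0 := by
    rw [← Nat.cast_mul, ← hrm, ZMod.natCast_self]
  constructor
  · intro h
    rw [Phi_apply] at h
    have hl : matM r a b g.left = 1 := congrArg SemidirectProduct.left h
    have hrt : g.right = 1 := congrArg SemidirectProduct.right h
    set L := toAdd g.left with hLdef
    have E : ∀ i, (a : ZMod r) * L i + (b : ZMod r) * L (i + 1) = 0 := by
      intro i
      have := congrFun (congrArg Multiplicative.toAdd hl) i
      rw [toAdd_matM] at this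
      simpa using this
    have E0 := E 0
    have E1 := E 1
    rw [fin_add_01.1] at E0
    rw [fin_add_01.2] at E1
    have E1' : (b : ZMod r) * L 0 + (a : ZMod r) * L 1 = 0 := by linear_combination E1
    obtain ⟨hxy, j, hj⟩ := hker (L 0) (L 1) E0 E1'
    rw [Subgroup.mem_zpowers_iff]
    refine ⟨j, ?_⟩
    rw [cEl_pow_zpow]
    refine SemidirectProduct.ext ?_ (by simpa using hrt.symm)
    rw [SemidirectProduct.left_inl]
    have hi : ∀ i : Fin 2, L i = (j : ZMod r) * ((m : ℕ) : ZMod r) := by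
      intro i
      fin_cases i
      · exact hj
      · show L 1 = _
        rw [← hxy]
        exact hj
    refine Multiplicative.toAdd.injective (funext fun i => ?_)
    rw [toAdd_ofAdd]
    exact (hi i).symm
  · rintro ⟨j, rfl⟩
    show Phi r a b ((cEl r 2 ^ m) ^ j) = 1
    rw [cEl_pow_zpow, Phi_inl]
    have : matM r a b (ofAdd fun _ => (j : ZMod r) * ((m : ℕ) : ZMod r)) = 1 := by
      refine Multiplicative.toAdd.injective (funext fun i => ?_)
      rw [toAdd_matM, toAdd_ofAdd]
      show (a : ZMod r) * ((j : ZMod r) * _) + (b : ZMod r) * ((j : ZMod r) * _) = (0 : Fin 2 → ZMod r) i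
      have : ((0 : Fin 2 → ZMod r)) i = 0 := rfl
      rw [this]
      linear_combination ((j : ZMod r) * ((m : ℕ) : ZMod r)) * hab' + (j : ZMod r) * hpm
    rw [this, map_one]

lemma Phi_surj [NeZero r] (p : ℕ) (a b : ℤ) (hab : a + b = (p : ℤ))
    (α β : ℤ) (hbez : ((a * α + b * β : ℤ) : ZMod r) = 1)
    (v₁ v₂ : ℤ) (hv1 : ((a * v₁ + b * v₂ : ℤ) : ZMod r) = 0)
    (hv2 : ((b * v₁ + a * v₂ : ℤ) : ZMod r) = ((p : ℕ) : ZMod r)) :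
    ∀ h : GG r 2, h ∈ Grpn r p 2 → ∃ g : GG r 2, Phi r a b g = h := by
  rintro ⟨n, π⟩ hmem
  rw [Grpn, Subgroup.mem_comap, Delta_mk, mem_pZ_iff] at hmem
  obtain ⟨k, hk⟩ := hmem
  rw [zsmul_eq_mul, toAdd_ofAdd] at hk
  set L := toAdd n with hL
  push_cast at hbez hv1 hv2
  have hab' : (a : ZMod r) + (b : ZMod r) = ((p : ℕ) : ZMod r) := by
    exact_mod_cast congrArg (Int.cast : ℤ → ZMod r) hab
  set t : ZMod r := (k : ZMod r) - ((α : ZMod r) + (β : ZMod r)) * L 0 with ht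
  refine ⟨⟨ofAdd ![(α : ZMod r) * L 0 + t * (v₁ : ZMod r),
                   (β : ZMod r) * L 0 + t * (v₂ : ZMod r)], π⟩, ?_⟩
  rw [Phi_apply]
  refine SemidirectProduct.ext ?_ rfl
  show matM r a b _ = n
  refine Multiplicative.toAdd.injective (funext (Fin.forall_fin_two.mpr ⟨?_, ?_⟩))
  · rw [toAdd_matM, toAdd_ofAdd, fin_add_01.1]
    rw [Matrix.cons_val_zero, Matrix.cons_val_one, Matrix.cons_val_zero]
    linear_combination (L 0) * hbez + t * hv1
  · rw [toAdd_matM, toAdd_ofAdd, fin_add_01.2]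
    rw [Matrix.cons_val_zero, Matrix.cons_val_one, Matrix.cons_val_zero]
    linear_combination t * hv2 + hk + ((α + β : ZMod r) * L 0) * hab' + (- L 0) * hbez

lemma diag_lemma [NeZero r] (p m : ℕ) (hp : 0 < p) (hrm : r = p * m) (x : ZMod r)
    (hx : ((p : ℕ) : ZMod r) * x = 0) :
    ∃ j : ℤ, x = (j : ZMod r) * ((m : ℕ) : ZMod r) := by
  have hval : ((x.val : ℕ) : ZMod r) = x := ZMod.natCast_rightInverse x
  have h1 : (((p * x.val : ℕ)) : ZMod r) = 0 := by
    push_cast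
    rw [hval]
    exact hx
  rw [ZMod.natCast_eq_zero_iff] at h1
  have h1' : p * m ∣ p * x.val := by
    rw [← hrm]
    exact h1
  have h2 : m ∣ x.val := (Nat.mul_dvd_mul_iff_left hp).mp h1'
  obtain ⟨j, hj⟩ := h2
  refine ⟨(j : ℤ), ?_⟩
  have h3 : x = ((m * j : ℕ) : ZMod r) := by
    rw [← hj]
    exact hval.symm
  rw [h3]
  push_cast
  ring

lemma even_ker [NeZero r] (m c : ℕ) (hm : Odd m) (hc : 0 < c)
    (hrm : r = (c + c) * m) (d : ℤ)
    (hd : (d = 1 ∧ Even c) ∨ (d = 2 ∧ Odd c)) :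
    ∀ x y : ZMod r, ((((c : ℤ) + d : ℤ)) : ZMod r) * x + ((((c : ℤ) - d : ℤ)) : ZMod r) * y = 0 →
      ((((c : ℤ) - d : ℤ)) : ZMod r) * x + ((((c : ℤ) + d : ℤ)) : ZMod r) * y = 0 →
      x = y ∧ ∃ j : ℤ, x = (j : ZMod r) * ((m : ℕ) : ZMod r) := by
  intro x y h1 h2
  obtain ⟨l, hl⟩ := id hm
  have hml : (m : ℤ) = 2 * l + 1 := by exact_mod_cast congrArg (Nat.cast : ℕ → ℤ) hl
  have hr' : (r : ℤ) = 2 * (c : ℤ) * (m : ℤ) := by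
    rw [hrm]; push_cast; ring
  have hXv : ((x.val : ℕ) : ZMod r) = x := ZMod.natCast_rightInverse x
  have hYv : ((y.val : ℕ) : ZMod r) = y := ZMod.natCast_rightInverse y
  set X : ℤ := (x.val : ℤ) with hXdef
  set Y : ℤ := (y.val : ℤ) with hYdef
  have hXlt : X < (r : ℤ) := by rw [hXdef]; exact_mod_cast x.val_lt
  have hYlt : Y < (r : ℤ) := by rw [hYdef]; exact_mod_cast y.val_lt
  have hX0 : 0 ≤ X := Int.natCast_nonneg _
  have hY0 : 0 ≤ Y := Int.natCast_nonneg _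
  have hxX : ((X : ℤ) : ZMod r) = x := by rw [hXdef]; push_cast; exact hXv
  have hyY : ((Y : ℤ) : ZMod r) = y := by rw [hYdef]; push_cast; exact hYv
  have d1 : (r : ℤ) ∣ ((c : ℤ) + d) * X + ((c : ℤ) - d) * Y := by
    rw [← ZMod.intCast_zmod_eq_zero_iff_dvd]
    push_cast
    rw [hxX, hyY]
    push_cast at h1
    linear_combination h1
  have d2 : (r : ℤ) ∣ ((c : ℤ) - d) * X + ((c : ℤ) + d) * Y := by
    rw [← ZMod.intCast_zmod_eq_zero_iff_dvd]
    push_cast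
    rw [hxX, hyY]
    push_cast at h2
    linear_combination h2
  have hcne : (2 : ℤ) * (c : ℤ) ≠ 0 := by positivity
  have hsum : 2 * (c : ℤ) * ((m : ℤ)) ∣ 2 * (c : ℤ) * (X + Y) := by
    rw [← hr']
    have h := dvd_add d1 d2
    have e : ((c : ℤ) + d) * X + ((c : ℤ) - d) * Y + (((c : ℤ) - d) * X + ((c : ℤ) + d) * Y)
        = 2 * (c : ℤ) * (X + Y) := by ring
    rwa [e] at h
  have hm1 : (m : ℤ) ∣ X + Y := (mul_dvd_mul_iff_left hcne).mp hsum
  obtain ⟨a', b', ha', hb'⟩ : ∃ a' b', (c : ℤ) + d = 2 * a' + 1 ∧ (c : ℤ) - d = 2 * b' + 1 := by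
    rcases hd with ⟨hd1, k, hk⟩ | ⟨hd2, k, hk⟩
    · refine ⟨(k : ℤ), (k : ℤ) - 1, ?_, ?_⟩ <;> (rw [hd1]; push_cast [hk]; ring)
    · refine ⟨(k : ℤ) + 1, (k : ℤ) - 1, ?_, ?_⟩ <;> (rw [hd2]; push_cast [hk]; ring)
  have h2XY : (2 : ℤ) ∣ X + Y := by
    have h2r : (2 : ℤ) ∣ (r : ℤ) := ⟨(c : ℤ) * m, by rw [hr']; ring⟩
    have h2d1 : (2 : ℤ) ∣ ((c : ℤ) + d) * X + ((c : ℤ) - d) * Y := h2r.trans d1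
    have e : X + Y = (((c : ℤ) + d) * X + ((c : ℤ) - d) * Y) - 2 * (a' * X + b' * Y) := by
      rw [ha', hb']; ring
    rw [e]
    exact dvd_sub h2d1 (dvd_mul_right 2 _)
  obtain ⟨s, hs⟩ := hm1
  have hseven : Even s := by
    rcases Int.even_mul.mp (by rw [← hs]; exact even_iff_two_dvd.mpr h2XY) with h | h
    · exfalso
      obtain ⟨w, hw⟩ := h
      omega
    · exact h
  obtain ⟨s', hs'⟩ := hseven
  have hXY2 : X + Y = 2 * (m : ℤ) * s' := by rw [hs, hs']; ring
  have hdXY : (r : ℤ) ∣ d * (X - Y) := by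
    have e : d * (X - Y) = (((c : ℤ) + d) * X + ((c : ℤ) - d) * Y) - (r : ℤ) * s' := by
      rw [hr']
      linear_combination (-(c : ℤ)) * hXY2
    rw [e]
    exact dvd_sub d1 (dvd_mul_right _ _)
  have hXYdvd : (r : ℤ) ∣ X - Y := by
    rcases hd with ⟨hd1, _⟩ | ⟨hd2, hoddc⟩
    · rw [hd1, one_mul] at hdXY
      exact hdXY
    · rw [hd2] at hdXY
      have hXYeven : (2 : ℤ) ∣ X - Y := by omega
      obtain ⟨W, hW⟩ := hXYeven
      rw [hW] at hdXY
      have h4 : 2 * ((c : ℤ) * m) ∣ 2 * (2 * W) := by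
        have hr'' : (r : ℤ) = 2 * ((c : ℤ) * m) := by rw [hr']; ring
        rw [← hr'']
        exact hdXY
      have h5 : (c : ℤ) * m ∣ 2 * W := (mul_dvd_mul_iff_left (two_ne_zero)).mp h4
      obtain ⟨k, hk⟩ := hoddc
      have hcop : IsCoprime ((c : ℤ) * m) 2 := by
        refine ⟨1, -(2 * (k : ℤ) * l + k + l), ?_⟩
        push_cast [hk, hl]
        ring
      have h6 : (c : ℤ) * m ∣ W := hcop.dvd_of_dvd_mul_left h5
      obtain ⟨w, hw⟩ := h6
      refine ⟨w, ?_⟩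
      rw [hW, hw, hr']
      ring
  have hXY0 : X - Y = 0 := by
    refine Int.eq_zero_of_abs_lt_dvd hXYdvd ?_
    rw [abs_sub_lt_iff]
    constructor <;> omega
  have hXeq : X = (m : ℤ) * s' := by
    have h2 : 2 * X = 2 * ((m : ℤ) * s') := by linarith
    exact mul_left_cancel₀ two_ne_zero h2
  constructor
  · have hval : x.val = y.val := by omega
    exact ZMod.val_injective r hval
  · refine ⟨s', ?_⟩
    have : x = (((m : ℤ) * s' : ℤ) : ZMod r) := by rw [← hXeq]; exact hxX.symm
    rw [this]
    push_cast
    ring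

lemma exists_good [NeZero r] (p m : ℕ) (hp : 0 < p) (hrm : r = p * m)
    (hodd : Odd p ∨ Odd m) :
    ∃ a b : ℤ, a + b = (p : ℤ) ∧
      (∃ α β : ℤ, ((a * α + b * β : ℤ) : ZMod r) = 1) ∧
      (∃ v₁ v₂ : ℤ, ((a * v₁ + b * v₂ : ℤ) : ZMod r) = 0 ∧
        ((b * v₁ + a * v₂ : ℤ) : ZMod r) = ((p : ℕ) : ZMod r)) ∧
      (∀ x y : ZMod r, (a : ZMod r) * x + (b : ZMod r) * y = 0 →
        (b : ZMod r) * x + (a : ZMod r) * y = 0 →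
        x = y ∧ ∃ j : ℤ, x = (j : ZMod r) * ((m : ℕ) : ZMod r)) := by
  by_cases hpo : Odd p
  · -- p odd : a = k+1, b = k
    obtain ⟨k, hk⟩ := hpo
    refine ⟨(k : ℤ) + 1, (k : ℤ), by push_cast [hk]; ring, ⟨1, -1, ?_⟩, ⟨-(k : ℤ), (k : ℤ) + 1, ?_, ?_⟩, ?_⟩
    · have e : (((k : ℤ) + 1) * 1 + (k : ℤ) * (-1) : ℤ) = 1 := by ring
      rw [e, Int.cast_one]
    · have e : (((k : ℤ) + 1) * (-(k : ℤ)) + (k : ℤ) * ((k : ℤ) + 1) : ℤ) = 0 := by ring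
      rw [e, Int.cast_zero]
    · have e : ((k : ℤ) * (-(k : ℤ)) + ((k : ℤ) + 1) * ((k : ℤ) + 1) : ℤ) = (p : ℤ) := by
        push_cast [hk]; ring
      rw [e, Int.cast_natCast]
    · intro x y h1 h2
      push_cast at h1 h2
      have hxy : x = y := by linear_combination h1 - h2
      have hp' : ((p : ℕ) : ZMod r) = 2 * ((k : ℕ) : ZMod r) + 1 := by
        exact_mod_cast congrArg (Nat.cast : ℕ → ZMod r) hk
      have hpx : ((p : ℕ) : ZMod r) * x = 0 := by
        rw [hp']
        linear_combination h1 + ((k : ZMod r)) * hxy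
      exact ⟨hxy, diag_lemma p m hp hrm x hpx⟩
  · -- p even, m odd
    have hpe : Even p := Nat.not_odd_iff_even.mp hpo
    have hm : Odd m := by
      rcases hodd with h | h
      · exact absurd h hpo
      · exact h
    obtain ⟨c, hc2⟩ := hpe
    have hc : 0 < c := by omega
    have hrm' : r = (c + c) * m := by rw [← hc2]; exact hrm
    obtain ⟨l, hl⟩ := id hm
    have hpc : ((p : ℕ) : ZMod r) = ((c : ZMod r) + (c : ZMod r)) := by
      exact_mod_cast congrArg (Nat.cast : ℕ → ZMod r) hc2
    by_cases hce : Even c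
    · -- d = 1 : a = c+1, b = c-1
      refine ⟨(c : ℤ) + 1, (c : ℤ) - 1, by push_cast [hc2]; ring, ?_, ?_, ?_⟩
      · obtain ⟨k, hk⟩ := hce
        refine ⟨1 - (k : ℤ), (k : ℤ), ?_⟩
        have e : (((c : ℤ) + 1) * (1 - (k : ℤ)) + ((c : ℤ) - 1) * (k : ℤ) : ℤ) = 1 := by
          push_cast [hk]; ring
        rw [e, Int.cast_one]
      · refine ⟨((l : ℤ) + 1) * (1 - (c : ℤ)), ((l : ℤ) + 1) * (1 + (c : ℤ)), ?_, ?_⟩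
        · have e : (((c : ℤ) + 1) * (((l : ℤ) + 1) * (1 - (c : ℤ)))
              + ((c : ℤ) - 1) * (((l : ℤ) + 1) * (1 + (c : ℤ))) : ℤ) = 0 := by ring
          rw [e, Int.cast_zero]
        · have e : (((c : ℤ) - 1) * (((l : ℤ) + 1) * (1 - (c : ℤ)))
              + ((c : ℤ) + 1) * (((l : ℤ) + 1) * (1 + (c : ℤ))) : ℤ) = (p : ℤ) + (r : ℤ) := by
            rw [hrm', hl, hc2]; push_cast; ring
          rw [e]
          push_cast [ZMod.natCast_self]
          ring
      · exact even_ker m c hm hc hrm' 1 (Or.inl ⟨rfl, hce⟩)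
    · -- d = 2 : a = c+2, b = c-2
      have hco : Odd c := Nat.not_even_iff_odd.mp hce
      refine ⟨(c : ℤ) + 2, (c : ℤ) - 2, by push_cast [hc2]; ring, ?_, ?_, ?_⟩
      · obtain ⟨i, hi⟩ := hco
        rcases Nat.even_or_odd i with ⟨e, he⟩ | ⟨e, he⟩
        · refine ⟨(e : ℤ), -((e : ℤ) + 1), ?_⟩
          have eq1 : (((c : ℤ) + 2) * (e : ℤ) + ((c : ℤ) - 2) * (-((e : ℤ) + 1)) : ℤ) = 1 := by
            push_cast [hi, he]; ring
          rw [eq1, Int.cast_one]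
        · refine ⟨-(e : ℤ), (e : ℤ) + 1, ?_⟩
          have eq1 : (((c : ℤ) + 2) * (-(e : ℤ)) + ((c : ℤ) - 2) * ((e : ℤ) + 1) : ℤ) = 1 := by
            push_cast [hi, he]; ring
          rw [eq1, Int.cast_one]
      · rcases Nat.even_or_odd l with ⟨e, he⟩ | ⟨e, he⟩
        · refine ⟨(l : ℤ) + 1 + (c : ℤ) * (e : ℤ), (l : ℤ) + 1 - (c : ℤ) * (e : ℤ), ?_, ?_⟩
          · have e1 : (((c : ℤ) + 2) * ((l : ℤ) + 1 + (c : ℤ) * (e : ℤ))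
                + ((c : ℤ) - 2) * ((l : ℤ) + 1 - (c : ℤ) * (e : ℤ)) : ℤ) = (r : ℤ) := by
              rw [hrm', hl, he]; push_cast; ring
            rw [e1]
            push_cast [ZMod.natCast_self]
            ring
          · have e2 : (((c : ℤ) - 2) * ((l : ℤ) + 1 + (c : ℤ) * (e : ℤ))
                + ((c : ℤ) + 2) * ((l : ℤ) + 1 - (c : ℤ) * (e : ℤ)) : ℤ) = (p : ℤ) := by
              rw [hc2, he]; push_cast; ring
            rw [e2, Int.cast_natCast]
        · refine ⟨(l : ℤ) + 1 - (c : ℤ) * ((e : ℤ) + 1), (l : ℤ) + 1 + (c : ℤ) * ((e : ℤ) + 1), ?_, ?_⟩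
          · have e1 : (((c : ℤ) + 2) * ((l : ℤ) + 1 - (c : ℤ) * ((e : ℤ) + 1))
                + ((c : ℤ) - 2) * ((l : ℤ) + 1 + (c : ℤ) * ((e : ℤ) + 1)) : ℤ) = 0 := by
              rw [he]; push_cast; ring
            rw [e1, Int.cast_zero]
          · have e2 : (((c : ℤ) - 2) * ((l : ℤ) + 1 - (c : ℤ) * ((e : ℤ) + 1))
                + ((c : ℤ) + 2) * ((l : ℤ) + 1 + (c : ℤ) * ((e : ℤ) + 1)) : ℤ) = (p : ℤ) + (r : ℤ) := by
              rw [hrm', hl, he, hc2]; push_cast; ring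
            rw [e2]
            push_cast [ZMod.natCast_self]
            ring
      · exact even_ker m c hm hc hrm' 2 (Or.inr ⟨rfl, hco⟩)

lemma build_iso [NeZero r] (p m : ℕ) (hp : 0 < p) (hrm : r = p * m)
    (a b : ℤ) (hab : a + b = (p : ℤ))
    (hbez : ∃ α β : ℤ, ((a * α + b * β : ℤ) : ZMod r) = 1)
    (hpre : ∃ v₁ v₂ : ℤ, ((a * v₁ + b * v₂ : ℤ) : ZMod r) = 0 ∧
      ((b * v₁ + a * v₂ : ℤ) : ZMod r) = ((p : ℕ) : ZMod r))
    (hker : ∀ x y : ZMod r, (a : ZMod r) * x + (b : ZMod r) * y = 0 →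
      (b : ZMod r) * x + (a : ZMod r) * y = 0 →
      x = y ∧ ∃ j : ℤ, x = (j : ZMod r) * ((m : ℕ) : ZMod r)) :
    Nonempty (Gpq r p 1 2 ≃* Gpq r 1 p 2) := by
  obtain ⟨α, β, hbez⟩ := hbez
  obtain ⟨v₁, v₂, hv1, hv2⟩ := hpre
  have hmem : ∀ g : GG r 2, Phi r a b g ∈ Grpn r p 2 := fun g => Phi_mem p a b hab g
  let Θ : GG r 2 →* ↥(Grpn r p 2) := (Phi r a b).codRestrict _ hmem
  let f : ↥(Grpn r 1 2) →* Gpq r p 1 2 := ((Gmk r p 1 2).comp Θ).comp (Grpn r 1 2).subtype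
  have hdiv : r / p = m := by rw [hrm]; exact Nat.mul_div_cancel_left m hp
  have hsurj : Function.Surjective f := by
    intro q
    obtain ⟨h, rfl⟩ := QuotientGroup.mk'_surjective (CsubIn r p 1 2) q
    obtain ⟨g, hg⟩ := Phi_surj p a b hab α β hbez v₁ v₂ hv1 hv2 (h : GG r 2) h.2
    refine ⟨⟨g, mem_Grpn_one g⟩, ?_⟩
    show Gmk r p 1 2 (Θ g) = QuotientGroup.mk' _ h
    congr 1
    exact Subtype.ext hg
  have hker_eq : f.ker = CsubIn r 1 p 2 := by
    have hone : CsubQ r 1 2 = ⊥ := by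
      rw [CsubQ, Nat.div_one, cEl_pow_r, Subgroup.zpowers_one_eq_bot]
    ext g
    rw [MonoidHom.mem_ker]
    have e1 : f g = Gmk r p 1 2 (Θ (g : GG r 2)) := rfl
    rw [e1, Gmk, QuotientGroup.mk'_apply, QuotientGroup.eq_one_iff]
    rw [CsubIn, Subgroup.mem_comap]
    have e2 : (Grpn r p 2).subtype (Θ (g : GG r 2)) = Phi r a b (g : GG r 2) := rfl
    rw [e2, hone, Subgroup.mem_bot]
    rw [Phi_eq_one_iff p m a b hrm hab hker]
    show (g : GG r 2) ∈ Subgroup.zpowers (cEl r 2 ^ m) ↔ g ∈ CsubIn r 1 p 2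
    rw [CsubIn, Subgroup.mem_comap, CsubQ, hdiv]
    rfl
  exact ⟨((QuotientGroup.quotientMulEquivOfEq hker_eq.symm).trans
      (QuotientGroup.quotientKerEquivOfSurjective f hsurj)).symm⟩

end GpqAux

/-- If `p` or `r/p` is odd, then `G(r,p,1,2) ≅ G(r,1,p,2)`. -/
theorem Gpq_rank_two_self_dual
    (r p : ℕ) (hr : 0 < r) (hp : p ∣ r)
    (hodd : Odd p ∨ Odd (r / p)) :
    Nonempty (Gpq r p 1 2 ≃* Gpq r 1 p 2) := by
  haveI : NeZero r := ⟨hr.ne'⟩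
  obtain ⟨m, hm⟩ := hp
  have hp0 : 0 < p := by
    rcases Nat.eq_zero_or_pos p with h | h
    · rw [h, zero_mul] at hm; omega
    · exact h
  have hodd' : Odd p ∨ Odd m := by
    have : r / p = m := by rw [hm]; exact Nat.mul_div_cancel_left m hp0
    rwa [this] at hodd
  obtain ⟨a, b, hab, hbez, hpre, hker⟩ := GpqAux.exists_good p m hp0 hm hodd'
  exact GpqAux.build_iso p m hp0 hm a b hab hbez hpre hker
end

section
/- Let r be a positive integer and let p, q be positive divisors of r with pq dividing 2r. Then the group G(r,p,q,2) has no class-preserving outer automorphisms: every automorphism ν of G(r,p,q,2) such that ν(g) is conjugate to g for all g ∈ G(r,p,q,2) is an inner automorphism, i.e., there exists x ∈ G(r,p,q,2) with ν(g) = xgx⁻¹ for all g. -/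
open SemidirectProduct Multiplicative

/-- Elementary key lemma: if a group `H` is covered by an abelian subgroup `A`
together with a single coset `A*t`, then every class-preserving automorphism of
`H` is inner. -/
lemma classPreserving_inner_of_cover {H : Type*} [Group H] (A : Subgroup H)
    (hA : ∀ a ∈ A, ∀ b ∈ A, a * b = b * a) (t : H)
    (cover : ∀ h : H, h ∈ A ∨ h * t⁻¹ ∈ A)
    (ν : MulAut H) (hν : ∀ g : H, IsConj g (ν g)) :
    ∃ x : H, ∀ g : H, ν g = x * g * x⁻¹ := by
  obtain ⟨s, hs⟩ := isConj_iff.mp (hν t)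
  set μ : H → H := fun g => s⁻¹ * ν g * s with hμ
  have μmul : ∀ g h : H, μ (g * h) = μ g * μ h := by
    intro g h; simp only [hμ, map_mul]; group
  have μt : μ t = t := by simp only [hμ, ← hs]; group
  have hnorm : ∀ h ∈ A, t * h * t⁻¹ ∈ A := by
    intro h hh
    rcases cover (t * h) with hc | hc
    · have ht : t ∈ A := by
        have := A.mul_mem hc (A.inv_mem hh)
        simpa [mul_assoc] using this
      exact A.mul_mem hc (A.inv_mem ht)
    · exact hc
  have dich : ∀ a ∈ A, μ a = a ∨ μ a = t * a * t⁻¹ := by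
    intro a ha
    obtain ⟨c, hc⟩ := isConj_iff.mp (hν a)
    have hμa : μ a = (s⁻¹ * c) * a * (s⁻¹ * c)⁻¹ := by
      simp only [hμ, ← hc]; group
    rcases cover (s⁻¹ * c) with hd | hd
    · left
      rw [hμa, ← hA a ha _ hd]
      group
    · right
      have hb : t * a * t⁻¹ ∈ A := hnorm a ha
      have h2 : μ a = (s⁻¹ * c * t⁻¹) * (t * a * t⁻¹) * (s⁻¹ * c * t⁻¹)⁻¹ := by
        rw [hμa]; group
      rw [h2, hA _ hd _ hb]
      group
  have glob : (∀ a ∈ A, μ a = a) ∨ (∀ a ∈ A, μ a = t * a * t⁻¹) := by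
    by_contra hcon
    push_neg at hcon
    obtain ⟨⟨a, ha, ha2⟩, ⟨b, hb, hb2⟩⟩ := hcon
    have hA1 : μ a = t * a * t⁻¹ := (dich a ha).resolve_left ha2
    have hB1 : μ b = b := (dich b hb).resolve_right hb2
    rcases dich (a * b) (A.mul_mem ha hb) with h | h
    · rw [μmul, hA1, hB1] at h
      have : t * a * t⁻¹ = a := mul_right_cancel h
      exact ha2 (hA1.trans this)
    · rw [μmul, hA1, hB1] at h
      have h' : (t * a * t⁻¹) * b = (t * a * t⁻¹) * (t * b * t⁻¹) := by
        rw [h]; group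
      have : b = t * b * t⁻¹ := mul_left_cancel h'
      exact hb2 (hB1.trans this)
  have νeq : ∀ g : H, ν g = s * μ g * s⁻¹ := by
    intro g; simp only [hμ]; group
  rcases glob with hid | hconj
  · refine ⟨s, fun g => ?_⟩
    have hg : μ g = g := by
      rcases cover g with hg | hg
      · exact hid g hg
      · have h1 : g = (g * t⁻¹) * t := by group
        rw [h1, μmul, hid _ hg, μt]
    rw [νeq, hg]
  · refine ⟨s * t, fun g => ?_⟩
    have hg : μ g = t * g * t⁻¹ := by
      rcases cover g with hg | hg
      · exact hconj g hg
      · have h1 : g = (g * t⁻¹) * t := by group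
        rw [h1, μmul, hconj _ hg, μt]
        group
    rw [νeq, hg]
    group

lemma perm_fin_two (π : Equiv.Perm (Fin 2)) : π = 1 ∨ π = Equiv.swap 0 1 := by
  revert π; decide

lemma comm_of_right_eq_one {r : ℕ} (g h : GG r 2) (hg : g.right = 1)
    (hh : h.right = 1) : g * h = h * g := by
  refine SemidirectProduct.ext ?_ ?_
  · simp [SemidirectProduct.mul_left, hg, hh, mul_comm]
  · simp [SemidirectProduct.mul_right, hg, hh]

/-- The group `G(r,p,q,2)` has no class-preserving outer
automorphisms: every automorphism sending each element to a conjugate is inner. -/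
theorem Gpq_rank_two_class_preserving_is_inner
    (r p q : ℕ) (hr : 0 < r) (hp : p ∣ r) (hq : q ∣ r) (hdvd : p * q ∣ 2 * r)
    (ν : MulAut (Gpq r p q 2)) (hν : ∀ g : Gpq r p q 2, IsConj g (ν g)) :
    ∃ x : Gpq r p q 2, ∀ g : Gpq r p q 2, ν g = x * g * x⁻¹ := by
  classical
  set K : Subgroup ↥(Grpn r p 2) :=
    (MonoidHom.ker (rightHom : GG r 2 →* Equiv.Perm (Fin 2))).comap
      (Grpn r p 2).subtype with hK
  set A : Subgroup (Gpq r p q 2) := K.map (Gmk r p q 2) with hAdef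
  have memK : ∀ g : ↥(Grpn r p 2), g ∈ K ↔ (g : GG r 2).right = 1 := by
    intro g
    exact Iff.rfl
  have hA : ∀ a ∈ A, ∀ b ∈ A, a * b = b * a := by
    intro a ha b hb
    rw [hAdef] at ha hb
    obtain ⟨k₁, hk₁, rfl⟩ := Subgroup.mem_map.mp ha
    obtain ⟨k₂, hk₂, rfl⟩ := Subgroup.mem_map.mp hb
    rw [← map_mul, ← map_mul]
    congr 1
    exact Subtype.ext
      (comm_of_right_eq_one _ _ ((memK k₁).mp hk₁) ((memK k₂).mp hk₂))
  have htmem : (inr (Equiv.swap 0 1 : Equiv.Perm (Fin 2)) : GG r 2) ∈ Grpn r p 2 := by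
    show DeltaHom r 2 _ ∈ pZ r p
    rw [DeltaHom, SemidirectProduct.lift_inr]
    exact (pZ r p).one_mem
  set tG : ↥(Grpn r p 2) := ⟨inr (Equiv.swap 0 1), htmem⟩ with htG
  set t : Gpq r p q 2 := Gmk r p q 2 tG with ht
  have cover : ∀ h : Gpq r p q 2, h ∈ A ∨ h * t⁻¹ ∈ A := by
    intro h
    obtain ⟨g, rfl⟩ := QuotientGroup.mk'_surjective (CsubIn r p q 2) h
    rcases perm_fin_two (g : GG r 2).right with h1 | h1
    · left
      exact Subgroup.mem_map.mpr ⟨g, (memK g).mpr h1, rfl⟩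
    · right
      rw [show (QuotientGroup.mk' (CsubIn r p q 2)) g = Gmk r p q 2 g from rfl,
        ht, ← map_inv, ← map_mul]
      refine Subgroup.mem_map.mpr ⟨g * tG⁻¹, (memK _).mpr ?_, rfl⟩
      show ((g : GG r 2) * (tG : GG r 2)⁻¹).right = 1
      have : rightHom ((g : GG r 2) * (tG : GG r 2)⁻¹) = 1 := by
        rw [map_mul, map_inv]
        rw [show (tG : GG r 2) = inr (Equiv.swap 0 1) from rfl, rightHom_inr]
        rw [show rightHom (g : GG r 2) = (g : GG r 2).right from rfl, h1]
        simp
      exact this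
  exact classPreserving_inner_of_cover A hA t cover ν hν
end
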